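/- arXiv:2012.06393 — 12 statements merged into one kernel-verified Lean document; each statement's English description precedes it below -/
import Mathlib

section
/- If A is an M×N matrix with all entries in [a,b] where 0 < a ≤ b, and positive vectors x ∈ R^M, y ∈ R^N satisfy the scaling equations ∑_j x_i A_{i,j} y_j = r_i and ∑_i x_i A_{i,j} y_j = c_j with positive r, c, ‖r‖₁ = ‖c‖₁ = s, and normalization ∑_i x_i = ∑_j y_j, then √(s/b) ≤ ∑_j y_j = ∑_i x_i ≤ √(s/a). -/
open Finset

theorem sum_scaling_factors_bounds
    (M N : ℕ) (A : Fin M → Fin N → ℝ) (a b s : ℝ)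
    (x : Fin M → ℝ) (y : Fin N → ℝ) (r : Fin M → ℝ) (c : Fin N → ℝ)
    (ha : 0 < a) (hab : a ≤ b)
    (hA : ∀ i j, a ≤ A i j ∧ A i j ≤ b)
    (hr : ∀ i, 0 < r i) (hc : ∀ j, 0 < c j)
    (hs_r : ∑ i, r i = s) (hs_c : ∑ j, c j = s)
    (hx : ∀ i, 0 < x i) (hy : ∀ j, 0 < y j)
    (hrow : ∀ i, ∑ j, x i * A i j * y j = r i)
    (hcol : ∀ j, ∑ i, x i * A i j * y j = c j)
    (hnorm : ∑ i, x i = ∑ j, y j) :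
    Real.sqrt (s / b) ≤ ∑ j, y j ∧ (∑ j, y j = ∑ i, x i) ∧
      ∑ i, x i ≤ Real.sqrt (s / a) := by
  have hb : 0 < b := ha.trans_le hab
  set t : ℝ := ∑ i, x i with ht
  have hty : ∑ j, y j = t := hnorm.symm
  have ht0 : 0 ≤ t := Finset.sum_nonneg fun i _ => (hx i).le
  have hs : s = ∑ i, ∑ j, x i * A i j * y j := by
    rw [← hs_r]; exact Finset.sum_congr rfl fun i _ => (hrow i).symm
  have hprod : t * t = ∑ i, ∑ j, x i * y j := by
    rw [← Finset.sum_mul_sum, ← hnorm]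
  have hlow : a * (t * t) ≤ s := by
    rw [hs, hprod, Finset.mul_sum]
    refine Finset.sum_le_sum fun i _ => ?_
    rw [Finset.mul_sum]
    refine Finset.sum_le_sum fun j _ => ?_
    have hxy : 0 ≤ x i * y j := le_of_lt (mul_pos (hx i) (hy j))
    calc a * (x i * y j) ≤ A i j * (x i * y j) :=
          mul_le_mul_of_nonneg_right (hA i j).1 hxy
      _ = x i * A i j * y j := by ring
  have hhigh : s ≤ b * (t * t) := by
    rw [hs, hprod, Finset.mul_sum]
    refine Finset.sum_le_sum fun i _ => ?_
    rw [Finset.mul_sum]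
    refine Finset.sum_le_sum fun j _ => ?_
    have hxy : 0 ≤ x i * y j := le_of_lt (mul_pos (hx i) (hy j))
    calc x i * A i j * y j = A i j * (x i * y j) := by ring
      _ ≤ b * (x i * y j) := mul_le_mul_of_nonneg_right (hA i j).2 hxy
  refine ⟨?_, hnorm.symm, ?_⟩
  · rw [hty]
    have h1 : s / b ≤ t * t := by
      rw [div_le_iff₀ hb]; linarith
    calc Real.sqrt (s / b) ≤ Real.sqrt (t * t) := Real.sqrt_le_sqrt h1
      _ = t := by rw [Real.sqrt_mul_self ht0]
  · have h2 : t * t ≤ s / a := by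
      rw [le_div_iff₀ ha]; linarith
    calc t = Real.sqrt (t * t) := by rw [Real.sqrt_mul_self ht0]
      _ ≤ Real.sqrt (s / a) := Real.sqrt_le_sqrt h2
end

section
/- If A is an M×N matrix with entries in [a,b], 0 < a ≤ b, and positive vectors x, y scale A to row sums r and column sums c with ‖r‖₁ = ‖c‖₁ = s and ∑_i x_i = ∑_j y_j, then for all i and j: (√a / b) ≤ x_i / (r_i/√s) ≤ (√b / a) and (√a / b) ≤ y_j / (c_j/√s) ≤ (√b / a). -/
open Finset

theorem boundedness_of_scaling_factors
    (M N : ℕ) (A : Fin M → Fin N → ℝ) (a b s : ℝ)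
    (x : Fin M → ℝ) (y : Fin N → ℝ) (r : Fin M → ℝ) (c : Fin N → ℝ)
    (ha : 0 < a) (hab : a ≤ b)
    (hA : ∀ i j, a ≤ A i j ∧ A i j ≤ b)
    (hr : ∀ i, 0 < r i) (hc : ∀ j, 0 < c j)
    (hs_r : ∑ i, r i = s) (hs_c : ∑ j, c j = s)
    (hx : ∀ i, 0 < x i) (hy : ∀ j, 0 < y j)
    (hrow : ∀ i, ∑ j, x i * A i j * y j = r i)
    (hcol : ∀ j, ∑ i, x i * A i j * y j = c j)
    (hnorm : ∑ i, x i = ∑ j, y j) :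
    (∀ i, Real.sqrt a / b ≤ x i / (r i / Real.sqrt s) ∧
        x i / (r i / Real.sqrt s) ≤ Real.sqrt b / a) ∧
    (∀ j, Real.sqrt a / b ≤ y j / (c j / Real.sqrt s) ∧
        y j / (c j / Real.sqrt s) ≤ Real.sqrt b / a) := by
  have hb : 0 < b := ha.trans_le hab
  rcases Nat.eq_zero_or_pos M with hM | hM
  · subst hM
    rcases Nat.eq_zero_or_pos N with hN | hN
    · subst hN
      exact ⟨fun i => i.elim0, fun j => j.elim0⟩
    · exfalso
      have j : Fin N := ⟨0, hN⟩
      have h := hcol j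
      simp at h
      exact (hc j).ne' h.symm
  rcases Nat.eq_zero_or_pos N with hN | hN
  · subst hN
    exfalso
    have i : Fin M := ⟨0, hM⟩
    have h := hrow i
    simp at h
    exact (hr i).ne' h.symm
  -- main case
  set Y := ∑ j, y j with hYdef
  have hY : 0 < Y := Finset.sum_pos (fun j _ => hy j) ⟨⟨0, hN⟩, mem_univ _⟩
  have hX : ∑ i, x i = Y := hnorm
  have hs : 0 < s := by
    rw [← hs_r]
    exact Finset.sum_pos (fun i _ => hr i) ⟨⟨0, hM⟩, mem_univ _⟩
  have step : ∀ (i : Fin M) (j : Fin N) (t : ℝ), 0 ≤ t → A i j ≤ t →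
      x i * A i j * y j ≤ x i * t * y j := fun i j t _ hAt =>
    mul_le_mul_of_nonneg_right (mul_le_mul_of_nonneg_left hAt (hx i).le) (hy j).le
  have step' : ∀ (i : Fin M) (j : Fin N) (t : ℝ), 0 ≤ t → t ≤ A i j →
      x i * t * y j ≤ x i * A i j * y j := fun i j t _ hAt =>
    mul_le_mul_of_nonneg_right (mul_le_mul_of_nonneg_left hAt (hx i).le) (hy j).le
  have hrlb : ∀ i, a * Y * x i ≤ r i := by
    intro i
    rw [← hrow i]
    have : a * Y * x i = ∑ j, x i * a * y j := by
      simp only [hYdef, Finset.mul_sum, Finset.sum_mul]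
      exact Finset.sum_congr rfl fun j _ => by ring
    rw [this]
    exact Finset.sum_le_sum fun j _ => step' i j a ha.le (hA i j).1
  have hrub : ∀ i, r i ≤ b * Y * x i := by
    intro i
    rw [← hrow i]
    have : b * Y * x i = ∑ j, x i * b * y j := by
      simp only [hYdef, Finset.mul_sum, Finset.sum_mul]
      exact Finset.sum_congr rfl fun j _ => by ring
    rw [this]
    exact Finset.sum_le_sum fun j _ => step i j b hb.le (hA i j).2
  have hclb : ∀ j, a * Y * y j ≤ c j := by
    intro j
    rw [← hcol j]
    have : a * Y * y j = ∑ i, x i * a * y j := by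
      simp only [← hX, Finset.mul_sum, Finset.sum_mul]
      exact Finset.sum_congr rfl fun i _ => by ring
    rw [this]
    exact Finset.sum_le_sum fun i _ => step' i j a ha.le (hA i j).1
  have hcub : ∀ j, c j ≤ b * Y * y j := by
    intro j
    rw [← hcol j]
    have : b * Y * y j = ∑ i, x i * b * y j := by
      simp only [← hX, Finset.mul_sum, Finset.sum_mul]
      exact Finset.sum_congr rfl fun i _ => by ring
    rw [this]
    exact Finset.sum_le_sum fun i _ => step i j b hb.le (hA i j).2
  have hsl : a * Y * Y ≤ s := by
    rw [← hs_r]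
    calc a * Y * Y = ∑ i, a * Y * x i := by rw [← Finset.mul_sum, hX]
    _ ≤ ∑ i, r i := Finset.sum_le_sum fun i _ => hrlb i
  have hsu : s ≤ b * Y * Y := by
    rw [← hs_r]
    calc ∑ i, r i ≤ ∑ i, b * Y * x i := Finset.sum_le_sum fun i _ => hrub i
    _ = b * Y * Y := by rw [← Finset.mul_sum, hX]
  have hsa : Real.sqrt a ^ 2 = a := Real.sq_sqrt ha.le
  have hsb : Real.sqrt b ^ 2 = b := Real.sq_sqrt hb.le
  have hss : Real.sqrt s ^ 2 = s := Real.sq_sqrt hs.le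
  have hsa0 : 0 < Real.sqrt a := Real.sqrt_pos.2 ha
  have hsb0 : 0 < Real.sqrt b := Real.sqrt_pos.2 hb
  have hss0 : 0 < Real.sqrt s := Real.sqrt_pos.2 hs
  have h1 : Y * Real.sqrt a ≤ Real.sqrt s := by
    have : Y * Real.sqrt a = Real.sqrt (Y ^ 2 * a) := by
      rw [Real.sqrt_mul (sq_nonneg Y), Real.sqrt_sq hY.le]
    rw [this]
    exact Real.sqrt_le_sqrt (by nlinarith)
  have h2 : Real.sqrt s ≤ Y * Real.sqrt b := by
    have : Y * Real.sqrt b = Real.sqrt (Y ^ 2 * b) := by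
      rw [Real.sqrt_mul (sq_nonneg Y), Real.sqrt_sq hY.le]
    rw [this]
    exact Real.sqrt_le_sqrt (by nlinarith)
  have key : ∀ t u : ℝ, 0 < t → 0 < u → a * Y * u ≤ t → t ≤ b * Y * u →
      Real.sqrt a / b ≤ u / (t / Real.sqrt s) ∧
        u / (t / Real.sqrt s) ≤ Real.sqrt b / a := by
    intro t u ht hu hlb hub
    rw [div_div_eq_mul_div]
    constructor
    · rw [div_le_div_iff₀ hb ht]
      nlinarith [mul_le_mul_of_nonneg_left hub hsa0.le,
        mul_le_mul_of_nonneg_left h1 (mul_nonneg hb.le hu.le)]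
    · rw [div_le_div_iff₀ ht ha]
      nlinarith [mul_le_mul_of_nonneg_left hlb hsb0.le,
        mul_le_mul_of_nonneg_left h2 (mul_nonneg ha.le hu.le)]
  exact ⟨fun i => key (r i) (x i) (hr i) (hx i) (hrlb i) (hrub i),
    fun j => key (c j) (y j) (hc j) (hy j) (hclb j) (hcub j)⟩
end

section
/- Suppose positive vectors x, y scale a positive matrix A to row sums r and column sums c (all positive, ‖r‖₁ = ‖c‖₁). Then any other pair (x', y') of positive vectors scaling A to the same row and column sums satisfies x' = αx and y' = α⁻¹y for some α > 0; moreover there is at most one such pair with ‖x‖₁ = ‖y‖₁. -/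
open Finset

theorem uniqueness_of_scaling_factors
    (M N : ℕ) (A : Fin M → Fin N → ℝ)
    (x x' : Fin M → ℝ) (y y' : Fin N → ℝ) (r : Fin M → ℝ) (c : Fin N → ℝ)
    (hA : ∀ i j, 0 < A i j)
    (hr : ∀ i, 0 < r i) (hc : ∀ j, 0 < c j)
    (hs : ∑ i, r i = ∑ j, c j)
    (hx : ∀ i, 0 < x i) (hy : ∀ j, 0 < y j)
    (hx' : ∀ i, 0 < x' i) (hy' : ∀ j, 0 < y' j)
    (hrow : ∀ i, ∑ j, x i * A i j * y j = r i)
    (hcol : ∀ j, ∑ i, x i * A i j * y j = c j)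
    (hrow' : ∀ i, ∑ j, x' i * A i j * y' j = r i)
    (hcol' : ∀ j, ∑ i, x' i * A i j * y' j = c j) :
    (∃ α : ℝ, 0 < α ∧ (∀ i, x' i = α * x i) ∧ (∀ j, y' j = α⁻¹ * y j)) ∧
    ((∑ i, x i = ∑ j, y j) → (∑ i, x' i = ∑ j, y' j) →
      x' = x ∧ y' = y) := by
  by_cases hM : M = 0
  · subst hM
    by_cases hN : N = 0
    · subst hN
      exact ⟨⟨1, one_pos, fun i => i.elim0, fun j => j.elim0⟩,
        fun _ _ => ⟨funext fun i => i.elim0, funext fun j => j.elim0⟩⟩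
    · exfalso
      have j : Fin N := ⟨0, Nat.pos_of_ne_zero hN⟩
      have h := hcol j
      simp at h
      exact absurd h.symm (hc j).ne'
  · have hN : N ≠ 0 := by
      intro hN
      subst hN
      have i : Fin M := ⟨0, Nat.pos_of_ne_zero hM⟩
      have h := hrow i
      simp at h
      exact absurd h.symm (hr i).ne'
    haveI : Nonempty (Fin M) := ⟨⟨0, Nat.pos_of_ne_zero hM⟩⟩
    haveI : Nonempty (Fin N) := ⟨⟨0, Nat.pos_of_ne_zero hN⟩⟩
    set u : Fin M → ℝ := fun i => x' i / x i with hu_def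
    set v : Fin N → ℝ := fun j => y' j / y j with hv_def
    have hu : ∀ i, 0 < u i := fun i => div_pos (hx' i) (hx i)
    have hv : ∀ j, 0 < v j := fun j => div_pos (hy' j) (hy j)
    have hux : ∀ i, u i * x i = x' i := fun i => div_mul_cancel₀ _ (hx i).ne'
    have hvy : ∀ j, v j * y j = y' j := fun j => div_mul_cancel₀ _ (hy j).ne'
    have key : ∀ i j, x' i * A i j * y' j = (x i * A i j * y j) * (u i * v j) := by
      intro i j
      rw [← hux i, ← hvy j]; ring
    have E1 : ∀ i, u i * ∑ j, (x i * A i j * y j) * v j = r i := by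
      intro i
      rw [← hrow' i, Finset.mul_sum]
      exact (Finset.sum_congr rfl fun j _ => by rw [key i j]; ring).symm
    have E2 : ∀ j, v j * ∑ i, (x i * A i j * y j) * u i = c j := by
      intro j
      rw [← hcol' j, Finset.mul_sum]
      exact (Finset.sum_congr rfl fun i _ => by rw [key i j]; ring).symm
    obtain ⟨i0, -, hi0⟩ := Finset.exists_max_image Finset.univ u Finset.univ_nonempty
    obtain ⟨j1, -, hj1⟩ := Finset.exists_min_image Finset.univ v Finset.univ_nonempty
    have hi0' : ∀ i, u i ≤ u i0 := fun i => hi0 i (Finset.mem_univ i)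
    have hj1' : ∀ j, v j1 ≤ v j := fun j => hj1 j (Finset.mem_univ j)
    have hB : ∀ i j, 0 < x i * A i j * y j := fun i j =>
      mul_pos (mul_pos (hx i) (hA i j)) (hy j)
    -- lower bound for the weighted row sum at i0
    have hlow : r i0 * v j1 ≤ ∑ j, (x i0 * A i0 j * y j) * v j := by
      rw [← hrow i0, Finset.sum_mul]
      exact Finset.sum_le_sum fun j _ =>
        mul_le_mul_of_nonneg_left (hj1' j) (hB i0 j).le
    -- upper bound for the weighted column sum at j1
    have hupp : ∑ i, (x i * A i j1 * y j1) * u i ≤ c j1 * u i0 := by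
      rw [← hcol j1, Finset.sum_mul]
      exact Finset.sum_le_sum fun i _ =>
        mul_le_mul_of_nonneg_left (hi0' i) (hB i j1).le
    -- u i0 * v j1 = 1
    have h1 : u i0 * v j1 ≤ 1 := by
      have := E1 i0
      nlinarith [hu i0, hv j1, hr i0, mul_le_mul_of_nonneg_left hlow (hu i0).le]
    have h2 : 1 ≤ u i0 * v j1 := by
      have := E2 j1
      nlinarith [hu i0, hv j1, hc j1, mul_le_mul_of_nonneg_left hupp (hv j1).le]
    have heq : u i0 * v j1 = 1 := le_antisymm h1 h2
    -- all v j equal to v j1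
    have hveq : ∀ j, v j = v j1 := by
      have hsum : ∑ j, (x i0 * A i0 j * y j) * v j1 = ∑ j, (x i0 * A i0 j * y j) * v j := by
        rw [← Finset.sum_mul, hrow i0]
        have hE := E1 i0
        have hu0 := hu i0
        field_simp at hE ⊢
        nlinarith [hE, heq, hr i0]
      have := (Finset.sum_eq_sum_iff_of_le
        (fun j _ => mul_le_mul_of_nonneg_left (hj1' j) (hB i0 j).le)).mp hsum
      intro j
      have hj := this j (Finset.mem_univ j)
      have := mul_left_cancel₀ (hB i0 j).ne' hj
      linarith
    -- all u i equal to u i0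
    have hueq : ∀ i, u i = u i0 := by
      have hsum : ∑ i, (x i * A i j1 * y j1) * u i = ∑ i, (x i * A i j1 * y j1) * u i0 := by
        rw [← Finset.sum_mul, hcol j1]
        have hE := E2 j1
        have hv1 := hv j1
        nlinarith [hE, heq, hc j1]
      have := (Finset.sum_eq_sum_iff_of_le
        (fun i _ => mul_le_mul_of_nonneg_left (hi0' i) (hB i j1).le)).mp hsum
      intro i
      have hi := this i (Finset.mem_univ i)
      exact mul_left_cancel₀ (hB i j1).ne' hi
    have hvinv : v j1 = (u i0)⁻¹ :=
      eq_inv_of_mul_eq_one_left (by rw [mul_comm]; exact heq)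
    have main : ∃ α : ℝ, 0 < α ∧ (∀ i, x' i = α * x i) ∧ (∀ j, y' j = α⁻¹ * y j) := by
      refine ⟨u i0, hu i0, fun i => ?_, fun j => ?_⟩
      · rw [← hux i, hueq i]
      · rw [← hvy j, hveq j, hvinv]
    refine ⟨main, fun hxy hxy' => ?_⟩
    obtain ⟨α, hα, hxα, hyα⟩ := main
    have hSx : 0 < ∑ i, x i := Finset.sum_pos (fun i _ => hx i) Finset.univ_nonempty
    have hsx' : ∑ i, x' i = α * ∑ i, x i := by
      rw [Finset.mul_sum]; exact Finset.sum_congr rfl fun i _ => hxα i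
    have hsy' : ∑ j, y' j = α⁻¹ * ∑ j, y j := by
      rw [Finset.mul_sum]; exact Finset.sum_congr rfl fun j _ => hyα j
    have hainv : α * α⁻¹ = 1 := mul_inv_cancel₀ hα.ne'
    have hα1 : α = 1 := by
      have h3 : α * ∑ i, x i = α⁻¹ * ∑ i, x i := by
        rw [← hsx', hxy', hsy', hxy]
      have h4 : α = α⁻¹ := mul_right_cancel₀ hSx.ne' h3
      have h5 : α * α = 1 := by nth_rewrite 2 [h4]; exact hainv
      nlinarith [hα, h5, sq_nonneg (α - 1)]
    constructor
    · funext i; rw [hxα i, hα1, one_mul]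
    · funext j; rw [hyα j, hα1, inv_one, one_mul]
end

section
/- Let P̃ be an M×N nonnegative matrix with row sums r and column sums c, and write P̃_{i,j} = u_i P̂_{i,j} v_j where P̂ is positive and u, v are positive vectors. If |(1/c_j)∑_i P̂_{i,j} − 1| ≤ ε and |(1/r_i)∑_j P̂_{i,j} − 1| ≤ ε for all i, j with ε ∈ (0,1), then 1/(1+ε) ≤ (max_i u_i)(min_j v_j) ≤ 1/(1−ε). -/
open Finset

theorem max_u_min_v_bounds
    (M N : ℕ) (hM : 0 < M) (hN : 0 < N)
    (Phat : Fin M → Fin N → ℝ) (u : Fin M → ℝ) (v : Fin N → ℝ)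
    (r : Fin M → ℝ) (c : Fin N → ℝ) (ε : ℝ)
    (hε : ε ∈ Set.Ioo (0 : ℝ) 1)
    (hP : ∀ i j, 0 < Phat i j)
    (hu : ∀ i, 0 < u i) (hv : ∀ j, 0 < v j)
    (hr : ∀ i, 0 < r i) (hc : ∀ j, 0 < c j)
    (hrow : ∀ i, ∑ j, u i * Phat i j * v j = r i)
    (hcol : ∀ j, ∑ i, u i * Phat i j * v j = c j)
    (hcolε : ∀ j, |(1 / c j) * ∑ i, Phat i j - 1| ≤ ε)
    (hrowε : ∀ i, |(1 / r i) * ∑ j, Phat i j - 1| ≤ ε) :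
    1 / (1 + ε) ≤ (⨆ i, u i) * (⨅ j, v j) ∧
      (⨆ i, u i) * (⨅ j, v j) ≤ 1 / (1 - ε) := by
  obtain ⟨hε0, hε1⟩ := hε
  haveI : Nonempty (Fin M) := ⟨⟨0, hM⟩⟩
  haveI : Nonempty (Fin N) := ⟨⟨0, hN⟩⟩
  obtain ⟨i0, hi0⟩ := Finite.exists_max u
  obtain ⟨j0, hj0⟩ := Finite.exists_min v
  have hsup : (⨆ i, u i) = u i0 :=
    le_antisymm (ciSup_le hi0) (le_ciSup (Set.Finite.bddAbove (Set.finite_range u)) i0)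
  have hinf : (⨅ j, v j) = v j0 :=
    le_antisymm (ciInf_le (Set.Finite.bddBelow (Set.finite_range v)) j0) (le_ciInf hj0)
  rw [hsup, hinf]
  have hU := hu i0
  have hV := hv j0
  -- bounds on column/row sums of Phat
  have hcolb : ∀ j, (1 - ε) * c j ≤ ∑ i, Phat i j ∧ ∑ i, Phat i j ≤ (1 + ε) * c j := by
    intro j
    have h := abs_le.mp (hcolε j)
    have hcj := hc j
    have key : ∑ i, Phat i j = c j * (1 / c j * ∑ i, Phat i j) := by field_simp
    constructor
    · nlinarith [h.1, hcj, key]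
    · nlinarith [h.2, hcj, key]
  have hrowb : ∀ i, (1 - ε) * r i ≤ ∑ j, Phat i j ∧ ∑ j, Phat i j ≤ (1 + ε) * r i := by
    intro i
    have h := abs_le.mp (hrowε i)
    have hri := hr i
    have key : ∑ j, Phat i j = r i * (1 / r i * ∑ j, Phat i j) := by field_simp
    constructor
    · nlinarith [h.1, hri, key]
    · nlinarith [h.2, hri, key]
  constructor
  · -- lower bound: c j0 ≤ u i0 * v j0 * ∑ i Phat i j0 ≤ u i0 * v j0 * (1+ε) * c j0
    have h1 : c j0 ≤ u i0 * v j0 * ∑ i, Phat i j0 := by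
      rw [← hcol j0, Finset.mul_sum]
      apply Finset.sum_le_sum
      intro i _
      have h := mul_le_mul_of_nonneg_right (hi0 i) (mul_nonneg (hP i j0).le (hv j0).le)
      nlinarith [h]
    have h2 := (hcolb j0).2
    have h3 : c j0 ≤ u i0 * v j0 * ((1 + ε) * c j0) := by
      calc c j0 ≤ u i0 * v j0 * ∑ i, Phat i j0 := h1
        _ ≤ u i0 * v j0 * ((1 + ε) * c j0) := by
            apply mul_le_mul_of_nonneg_left h2 (by positivity)
    rw [div_le_iff₀ (by linarith)]
    have hcj := hc j0
    nlinarith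
  · -- upper bound
    have h1 : u i0 * v j0 * ∑ j, Phat i0 j ≤ r i0 := by
      rw [← hrow i0, Finset.mul_sum]
      apply Finset.sum_le_sum
      intro j _
      have h := mul_le_mul_of_nonneg_right (hj0 j) (mul_nonneg (hu i0).le (hP i0 j).le)
      nlinarith [h]
    have h2 := (hrowb i0).1
    have h3 : u i0 * v j0 * ((1 - ε) * r i0) ≤ r i0 := by
      calc u i0 * v j0 * ((1 - ε) * r i0) ≤ u i0 * v j0 * ∑ j, Phat i0 j := by
            apply mul_le_mul_of_nonneg_left h2 (by positivity)
        _ ≤ r i0 := h1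
    rw [le_div_iff₀ (by linarith)]
    have hri := hr i0
    nlinarith
end

section
/- Under the same setup (P̃_{i,j} = u_i P̂_{i,j} v_j with exact row sums r and column sums c for P̃, and approximate scaling of P̂ to within relative error ε ∈ (0,1)), it also holds that 1/(1+ε) ≤ (min_i u_i)(max_j v_j) ≤ 1/(1−ε). -/
open Finset

theorem min_u_max_v_bounds
    (M N : ℕ) (hM : 0 < M) (hN : 0 < N)
    (Phat : Fin M → Fin N → ℝ) (u : Fin M → ℝ) (v : Fin N → ℝ)
    (r : Fin M → ℝ) (c : Fin N → ℝ) (ε : ℝ)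
    (hε : ε ∈ Set.Ioo (0 : ℝ) 1)
    (hP : ∀ i j, 0 < Phat i j)
    (hu : ∀ i, 0 < u i) (hv : ∀ j, 0 < v j)
    (hr : ∀ i, 0 < r i) (hc : ∀ j, 0 < c j)
    (hrow : ∀ i, ∑ j, u i * Phat i j * v j = r i)
    (hcol : ∀ j, ∑ i, u i * Phat i j * v j = c j)
    (hcolε : ∀ j, |(1 / c j) * ∑ i, Phat i j - 1| ≤ ε)
    (hrowε : ∀ i, |(1 / r i) * ∑ j, Phat i j - 1| ≤ ε) :
    1 / (1 + ε) ≤ (⨅ i, u i) * (⨆ j, v j) ∧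
      (⨅ i, u i) * (⨆ j, v j) ≤ 1 / (1 - ε) := by
  obtain ⟨hε0, hε1⟩ := hε
  haveI : Nonempty (Fin M) := ⟨⟨0, hM⟩⟩
  haveI : Nonempty (Fin N) := ⟨⟨0, hN⟩⟩
  obtain ⟨i0, hi0⟩ := exists_eq_ciInf_of_finite (f := u)
  obtain ⟨j0, hj0⟩ := exists_eq_ciSup_of_finite (f := v)
  set m := ⨅ i, u i with hm
  set s := ⨆ j, v j with hs
  have hmpos : 0 < m := hi0 ▸ hu i0
  have hspos : 0 < s := hj0 ▸ hv j0
  have hmle : ∀ i, m ≤ u i := fun i => ciInf_le (Finite.bddBelow_range u) i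
  have hsle : ∀ j, v j ≤ s := fun j => le_ciSup (Finite.bddAbove_range v) j
  constructor
  · -- use row i0
    have h1 := hrowε i0
    rw [abs_le] at h1
    have hr0 := hr i0
    have hS : ∑ j, Phat i0 j ≤ (1 + ε) * r i0 := by
      have h2 : 1 / r i0 * ∑ j, Phat i0 j ≤ 1 + ε := by linarith [h1.2]
      calc ∑ j, Phat i0 j = r i0 * (1 / r i0 * ∑ j, Phat i0 j) := by field_simp
        _ ≤ r i0 * (1 + ε) := mul_le_mul_of_nonneg_left h2 hr0.le
        _ = (1 + ε) * r i0 := mul_comm _ _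
    have hkey : r i0 ≤ m * s * ((1 + ε) * r i0) := by
      calc r i0 = ∑ j, u i0 * Phat i0 j * v j := (hrow i0).symm
        _ ≤ ∑ j, m * s * Phat i0 j := by
            apply Finset.sum_le_sum
            intro j _
            have : u i0 * Phat i0 j * v j ≤ u i0 * Phat i0 j * s :=
              mul_le_mul_of_nonneg_left (hsle j)
                (mul_nonneg (hu i0).le (hP i0 j).le)
            have h2 : u i0 * Phat i0 j * s = m * s * Phat i0 j := by
              rw [hi0]; ring
            linarith
        _ = m * s * ∑ j, Phat i0 j := by rw [Finset.mul_sum]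
        _ ≤ m * s * ((1 + ε) * r i0) :=
            mul_le_mul_of_nonneg_left hS (mul_nonneg hmpos.le hspos.le)
    rw [div_le_iff₀ (by linarith : (0:ℝ) < 1 + ε)]
    nlinarith [mul_pos hmpos hspos]
  · -- use column j0
    have h1 := hcolε j0
    rw [abs_le] at h1
    have hc0 := hc j0
    have hS : (1 - ε) * c j0 ≤ ∑ i, Phat i j0 := by
      have h2 : 1 - ε ≤ 1 / c j0 * ∑ i, Phat i j0 := by linarith [h1.1]
      calc (1 - ε) * c j0 ≤ (1 / c j0 * ∑ i, Phat i j0) * c j0 :=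
            mul_le_mul_of_nonneg_right h2 hc0.le
        _ = ∑ i, Phat i j0 := by field_simp
    have hkey : m * s * ((1 - ε) * c j0) ≤ c j0 := by
      calc m * s * ((1 - ε) * c j0) ≤ m * s * ∑ i, Phat i j0 :=
            mul_le_mul_of_nonneg_left hS (mul_nonneg hmpos.le hspos.le)
        _ = ∑ i, m * s * Phat i j0 := by rw [Finset.mul_sum]
        _ ≤ ∑ i, u i * Phat i j0 * v j0 := by
            apply Finset.sum_le_sum
            intro i _
            have h2 : m * s * Phat i j0 = m * Phat i j0 * v j0 := by
              rw [hj0]; ring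
            have : m * Phat i j0 * v j0 ≤ u i * Phat i j0 * v j0 := by
              apply mul_le_mul_of_nonneg_right _ (hv j0).le
              exact mul_le_mul_of_nonneg_right (hmle i) (hP i j0).le
            linarith
        _ = c j0 := hcol j0
    rw [le_div_iff₀ (by linarith : (0:ℝ) < 1 - ε)]
    nlinarith
end

section
/- In the setting where P̃_{i,j} = u_i P̂_{i,j} v_j has exact row sums r and P̂ satisfies the approximate scaling bounds with ε ∈ (0,1), if ℓ = argmax_i u_i, then (1/r_ℓ) ∑_j P̂_{ℓ,j} (v_j/(min_j v_j) − 1) ≤ 2ε. -/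
open Finset

theorem argmax_row_sum_bound
    (M N : ℕ) (hM : 0 < M) (hN : 0 < N)
    (Phat : Fin M → Fin N → ℝ) (u : Fin M → ℝ) (v : Fin N → ℝ)
    (r : Fin M → ℝ) (ε : ℝ)
    (hε : ε ∈ Set.Ioo (0 : ℝ) 1)
    (hP : ∀ i j, 0 < Phat i j)
    (hu : ∀ i, 0 < u i) (hv : ∀ j, 0 < v j)
    (hr : ∀ i, 0 < r i)
    (hrow : ∀ i, ∑ j, u i * Phat i j * v j = r i)
    (hrowε : ∀ i, |(1 / r i) * ∑ j, Phat i j - 1| ≤ ε)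
    (hmaxmin : 1 / (1 + ε) ≤ (⨆ i, u i) * (⨅ j, v j))
    (ℓ : Fin M) (hℓ : ∀ i, u i ≤ u ℓ) :
    (1 / r ℓ) * ∑ j, Phat ℓ j * (v j / (⨅ j', v j') - 1) ≤ 2 * ε := by
  obtain ⟨hε0, hε1⟩ := hε
  haveI : Nonempty (Fin M) := ⟨⟨0, hM⟩⟩
  haveI : Nonempty (Fin N) := ⟨⟨0, hN⟩⟩
  have hsup : (⨆ i, u i) = u ℓ :=
    le_antisymm (ciSup_le hℓ) (le_ciSup (Set.Finite.bddAbove (Set.finite_range u)) ℓ)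
  obtain ⟨j0, hj0⟩ : ∃ j0, ∀ j, v j0 ≤ v j := Finite.exists_min v
  have hinf : (⨅ j', v j') = v j0 :=
    le_antisymm (ciInf_le (Set.Finite.bddBelow (Set.finite_range v)) j0) (le_ciInf hj0)
  set m := (⨅ j', v j') with hm
  have hm0 : 0 < m := hinf ▸ hv j0
  have huℓ := hu ℓ
  have hrℓ := hr ℓ
  have hsum : ∑ j, Phat ℓ j * v j = r ℓ / u ℓ := by
    have h := hrow ℓ
    have : u ℓ * ∑ j, Phat ℓ j * v j = r ℓ := by
      rw [Finset.mul_sum]; rw [← h]; congr 1; ext j; ring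
    field_simp [huℓ.ne'] at this ⊢
    linarith [this]
  have hS : 1 - ε ≤ (1 / r ℓ) * ∑ j, Phat ℓ j := by
    have := abs_le.mp (hrowε ℓ)
    linarith [this.1]
  have hum : 1 / (1 + ε) ≤ u ℓ * m := by rw [← hsup]; exact hmaxmin
  have hum0 : 0 < u ℓ * m := mul_pos huℓ hm0
  have h1 : 1 / (u ℓ * m) ≤ 1 + ε := by
    rw [div_le_iff₀ hum0]
    rw [div_le_iff₀ (by linarith : (0:ℝ) < 1 + ε)] at hum
    nlinarith
  have hexp : ∑ j, Phat ℓ j * (v j / m - 1)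
      = (∑ j, Phat ℓ j * v j) / m - ∑ j, Phat ℓ j := by
    simp only [mul_sub, mul_one, ← mul_div_assoc]
    rw [Finset.sum_sub_distrib, ← Finset.sum_div]
  rw [hexp, hsum]
  have key : (1 / r ℓ) * (r ℓ / u ℓ / m - ∑ j, Phat ℓ j)
      = 1 / (u ℓ * m) - (1 / r ℓ) * ∑ j, Phat ℓ j := by
    rw [mul_sub, div_div, one_div_mul_eq_div, div_right_comm, div_self hrℓ.ne']
  rw [key]
  linarith
end

section
/- Let Ã be a random M×N matrix with independent entries in each row and each column, Ã_{i,j} ∈ [a_{i,j}, b_{i,j}] almost surely, and A = E[Ã]. Let (x,y) be positive vectors scaling A to row sums r and column sums c with ‖r‖₁ = ‖c‖₁ = s, a = min a_{i,j} > 0, b = max b_{i,j}. Then for every ε > 0 and each i: Pr{ |(1/r_i) ∑_j x_i Ã_{i,j} y_j − 1| > ε } ≤ 2 exp( −2ε²s² / (C² ∑_j c_j² (b_{i,j} − a_{i,j})²) ), where C = b/a². -/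
open Finset MeasureTheory ProbabilityTheory

lemma logistic_ineq {p : ℝ} (hp0 : 0 ≤ p) (hp1 : p ≤ 1) (h : ℝ) :
    1 - p + p * Real.exp h ≤ Real.exp (p * h + h ^ 2 / 8) := by
  set D : ℝ → ℝ := fun u => 1 - p + p * Real.exp u with hDdef
  have hD : ∀ u, 0 < D u := by
    intro u
    rcases hp0.eq_or_lt with hp | hp
    · simp [D, ← hp]
    · have : 0 < p * Real.exp u := by positivity
      have : 0 ≤ 1 - p := by linarith
      simp only [D]; nlinarith
  set q : ℝ → ℝ := fun u => p * Real.exp u / D u with hqdef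
  have hq01 : ∀ u, 0 ≤ q u ∧ q u ≤ 1 := by
    intro u
    constructor
    · exact div_nonneg (by positivity) (hD u).le
    · rw [div_le_one (hD u)]
      simp only [D]; linarith
  have hq_one_sub : ∀ u, 1 - q u = (1 - p) / D u := by
    intro u
    have hDu := (hD u).ne'
    simp only [q]
    rw [eq_div_iff hDu, sub_mul, div_mul_cancel₀ _ hDu]
    simp only [D]; ring
  have hDderiv : ∀ u, HasDerivAt D (p * Real.exp u) u := by
    intro u
    exact ((Real.hasDerivAt_exp u).const_mul p).const_add (1 - p)
  have hqderiv : ∀ u, HasDerivAt q (q u * (1 - q u)) u := by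
    intro u
    have h1 : HasDerivAt (fun v => p * Real.exp v) (p * Real.exp u) u :=
      (Real.hasDerivAt_exp u).const_mul p
    have h2 := h1.div (hDderiv u) (hD u).ne'
    have h3 : HasDerivAt q ((p * Real.exp u * D u - p * Real.exp u * (p * Real.exp u)) / D u ^ 2) u := h2
    convert h3 using 1
    rw [hq_one_sub u]
    simp only [q]
    rw [div_mul_div_comm, ← sq]
    congr 1
    simp only [D]; ring
  set g : ℝ → ℝ := fun u => p * u + u ^ 2 / 8 - Real.log (D u) with hgdef
  set gd : ℝ → ℝ := fun u => p + u / 4 - q u with hgddef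
  have hgderiv : ∀ u, HasDerivAt g (gd u) u := by
    intro u
    have h1 : HasDerivAt (fun v : ℝ => p * v) p u := by
      simpa using (hasDerivAt_id u).const_mul p
    have h2 : HasDerivAt (fun v : ℝ => v ^ 2 / 8) (u / 4) u := by
      have := (hasDerivAt_pow 2 u).div_const 8
      exact this.congr_deriv (by rw [show (2:ℕ) - 1 = 1 from rfl]; push_cast; ring)
    have h3 : HasDerivAt (fun v => Real.log (D v)) (p * Real.exp u / D u) u :=
      (hDderiv u).log (hD u).ne'
    exact (h1.add h2).sub h3
  have hgdderiv : ∀ u, HasDerivAt gd (1 / 4 - q u * (1 - q u)) u := by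
    intro u
    have h1 : HasDerivAt (fun v : ℝ => p + v / 4) (1 / 4) u := by
      simpa using ((hasDerivAt_id u).div_const 4).const_add p
    exact h1.sub (hqderiv u)
  have hgd_mono : Monotone gd := by
    apply monotone_of_deriv_nonneg (fun u => (hgdderiv u).differentiableAt)
    intro u
    rw [(hgdderiv u).deriv]
    obtain ⟨h0, h1'⟩ := hq01 u
    nlinarith [sq_nonneg (q u - 1/2)]
  have hgd0 : gd 0 = 0 := by
    simp only [gd, q, D, Real.exp_zero, mul_one]
    have h1 : (1:ℝ) - p + p = 1 := by ring
    rw [h1]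
    simp
  have hg_diff : Differentiable ℝ g := fun u => (hgderiv u).differentiableAt
  have hg_nonneg : ∀ u, 0 ≤ g u := by
    have hg0 : g 0 = 0 := by
      simp only [g, D, Real.exp_zero, mul_one]
      have h1 : (1:ℝ) - p + p = 1 := by ring
      rw [h1]
      simp
    intro u
    rcases le_or_gt 0 u with hu | hu
    · have : g 0 ≤ g u := by
        apply monotoneOn_of_deriv_nonneg (convex_Ici 0) hg_diff.continuous.continuousOn
          (hg_diff.differentiableOn) _ Set.self_mem_Ici hu hu
        intro v hv
        rw [interior_Ici] at hv
        rw [(hgderiv v).deriv]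
        have := hgd_mono (le_of_lt hv)
        rw [hgd0] at this
        exact this
      linarith [hg0 ▸ this]
    · have : g u ≥ g 0 := by
        have := antitoneOn_of_deriv_nonpos (convex_Iic 0) hg_diff.continuous.continuousOn
          (hg_diff.differentiableOn) ?_ hu.le Set.self_mem_Iic hu.le
        · exact this
        · intro v hv
          rw [interior_Iic] at hv
          rw [(hgderiv v).deriv]
          have := hgd_mono (le_of_lt hv)
          rw [hgd0] at this
          exact this
      linarith [hg0 ▸ this]
  have := hg_nonneg h
  simp only [g] at this
  have hlog : Real.log (D h) ≤ p * h + h ^ 2 / 8 := by linarith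
  calc D h = Real.exp (Real.log (D h)) := (Real.exp_log (hD h)).symm
    _ ≤ Real.exp (p * h + h ^ 2 / 8) := Real.exp_le_exp.2 hlog

lemma integrable_of_bdd {Ω : Type*} [MeasurableSpace Ω] {μ : Measure Ω} [IsProbabilityMeasure μ]
    {X : Ω → ℝ} (hX : Measurable X) {A B : ℝ} (hb : ∀ᵐ ω ∂μ, X ω ∈ Set.Icc A B) :
    Integrable X μ := by
  refine Integrable.mono' (integrable_const (|A| + |B|)) hX.aestronglyMeasurable ?_
  filter_upwards [hb] with ω hω
  obtain ⟨h1, h2⟩ := hω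
  rw [Real.norm_eq_abs, abs_le]
  constructor
  · calc -(|A| + |B|) ≤ -|A| := by linarith [abs_nonneg B]
      _ ≤ A := neg_abs_le A
      _ ≤ X ω := h1
  · calc X ω ≤ B := h2
      _ ≤ |B| := le_abs_self B
      _ ≤ |A| + |B| := by linarith [abs_nonneg A]

lemma integrable_exp_mul_of_bdd {Ω : Type*} [MeasurableSpace Ω] {μ : Measure Ω}
    [IsProbabilityMeasure μ]
    {X : Ω → ℝ} (hX : Measurable X) {A B : ℝ} (hb : ∀ᵐ ω ∂μ, X ω ∈ Set.Icc A B) (t : ℝ) :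
    Integrable (fun ω => Real.exp (t * X ω)) μ := by
  refine Integrable.mono' (integrable_const (Real.exp (|t| * (|A| + |B|))))
    (hX.const_mul t).exp.aestronglyMeasurable ?_
  filter_upwards [hb] with ω hω
  obtain ⟨h1, h2⟩ := hω
  rw [Real.norm_eq_abs, abs_of_nonneg (Real.exp_nonneg _)]
  apply Real.exp_le_exp.2
  calc t * X ω ≤ |t * X ω| := le_abs_self _
    _ = |t| * |X ω| := abs_mul _ _
    _ ≤ |t| * (|A| + |B|) := by
        apply mul_le_mul_of_nonneg_left _ (abs_nonneg t)
        rw [abs_le]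
        constructor
        · linarith [abs_nonneg B, neg_abs_le A]
        · linarith [abs_nonneg A, le_abs_self B]

/-- Hoeffding's lemma -/
lemma hoeffding_lemma {Ω : Type*} [MeasurableSpace Ω] (μ : Measure Ω) [IsProbabilityMeasure μ]
    {X : Ω → ℝ} (hX : Measurable X) {A B : ℝ} (hb : ∀ᵐ ω ∂μ, X ω ∈ Set.Icc A B) (t : ℝ) :
    mgf X μ t ≤ Real.exp (t * (∫ ω, X ω ∂μ) + t ^ 2 * (B - A) ^ 2 / 8) := by
  have hXint : Integrable X μ := integrable_of_bdd hX hb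
  set m : ℝ := ∫ ω, X ω ∂μ with hm
  have hAB : A ≤ B := by
    obtain ⟨ω, hω⟩ := hb.exists
    linarith [hω.1, hω.2]
  have hAm : A ≤ m := by
    have : (∫ _ : Ω, A ∂μ) ≤ ∫ ω, X ω ∂μ := by
      apply integral_mono_ae (integrable_const A) hXint
      filter_upwards [hb] with ω hω using hω.1
    simpa using this
  have hmB : m ≤ B := by
    have : (∫ ω, X ω ∂μ) ≤ ∫ _ : Ω, B ∂μ := by
      apply integral_mono_ae hXint (integrable_const B)
      filter_upwards [hb] with ω hω using hω.2
    simpa using this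
  rcases eq_or_lt_of_le hAB with hEq | hlt
  · -- A = B : X = A a.s.
    have hXa : ∀ᵐ ω ∂μ, X ω = A := by
      filter_upwards [hb] with ω hω
      exact le_antisymm (hEq ▸ hω.2) hω.1
    have hmgf : mgf X μ t = Real.exp (t * A) := by
      rw [mgf]
      rw [integral_congr_ae (g := fun _ => Real.exp (t * A)) ?_]
      · simp
      · filter_upwards [hXa] with ω hω; rw [hω]
    have hmA : m = A := le_antisymm (hEq ▸ hmB) hAm
    rw [hmgf, hmA, ← hEq]
    apply Real.exp_le_exp.2
    nlinarith [sq_nonneg t]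
  · -- A < B
    have hBA : 0 < B - A := by linarith
    set p : ℝ := (m - A) / (B - A) with hp
    have hp0 : 0 ≤ p := div_nonneg (by linarith) hBA.le
    have hp1 : p ≤ 1 := by
      rw [div_le_one hBA]; linarith
    set h : ℝ := t * (B - A) with hh
    -- convexity bound integrated
    have step1 : mgf X μ t ≤ (B - m) / (B - A) * Real.exp (t * A)
        + (m - A) / (B - A) * Real.exp (t * B) := by
      have hineq : ∀ᵐ ω ∂μ, Real.exp (t * X ω) ≤
          (B - X ω) / (B - A) * Real.exp (t * A) + (X ω - A) / (B - A) * Real.exp (t * B) := by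
        filter_upwards [hb] with ω hω
        obtain ⟨h1, h2⟩ := hω
        have w1 : (0:ℝ) ≤ (B - X ω) / (B - A) := div_nonneg (by linarith) hBA.le
        have w2 : (0:ℝ) ≤ (X ω - A) / (B - A) := div_nonneg (by linarith) hBA.le
        have wsum : (B - X ω) / (B - A) + (X ω - A) / (B - A) = 1 := by
          rw [← add_div]
          have : B - X ω + (X ω - A) = B - A := by ring
          rw [this, div_self hBA.ne']
        have hconv := convexOn_exp.2 (Set.mem_univ (t * A)) (Set.mem_univ (t * B)) w1 w2 wsum
        have harg : (B - X ω) / (B - A) * (t * A) + (X ω - A) / (B - A) * (t * B) = t * X ω := by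
          field_simp
          ring
        simp only [smul_eq_mul] at hconv
        rw [harg] at hconv
        exact hconv
      have hrhs_int : Integrable (fun ω =>
          (B - X ω) / (B - A) * Real.exp (t * A) + (X ω - A) / (B - A) * Real.exp (t * B)) μ := by
        apply Integrable.add
        · exact (((integrable_const B).sub hXint).div_const _).mul_const _
        · exact ((hXint.sub (integrable_const A)).div_const _).mul_const _
      calc mgf X μ t ≤ ∫ ω, ((B - X ω) / (B - A) * Real.exp (t * A)
            + (X ω - A) / (B - A) * Real.exp (t * B)) ∂μ :=
            integral_mono_ae (integrable_exp_mul_of_bdd hX hb t) hrhs_int hineq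
        _ = (B - m) / (B - A) * Real.exp (t * A) + (m - A) / (B - A) * Real.exp (t * B) := by
            have hrw : (fun ω => (B - X ω) / (B - A) * Real.exp (t * A)
                + (X ω - A) / (B - A) * Real.exp (t * B))
                = fun ω => ((Real.exp (t * B) - Real.exp (t * A)) / (B - A)) * X ω
                  + (B * Real.exp (t * A) - A * Real.exp (t * B)) / (B - A) := by
              funext w
              field_simp
              ring
            rw [hrw, integral_add (hXint.const_mul _) (integrable_const _),
              integral_const_mul, integral_const]
            simp only [probReal_univ, smul_eq_mul, one_mul]
            rw [← hm]
            field_simp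
            ring
    have step2 : (B - m) / (B - A) * Real.exp (t * A) + (m - A) / (B - A) * Real.exp (t * B)
        = Real.exp (t * A) * (1 - p + p * Real.exp h) := by
      have h1p : 1 - p = (B - m) / (B - A) := by
        rw [hp]; field_simp; ring
      have heB : Real.exp (t * B) = Real.exp (t * A) * Real.exp h := by
        rw [← Real.exp_add, hh]; ring_nf
      rw [heB, ← h1p, hp]
      ring
    have step3 : Real.exp (t * A) * (1 - p + p * Real.exp h)
        ≤ Real.exp (t * A) * Real.exp (p * h + h ^ 2 / 8) :=
      mul_le_mul_of_nonneg_left (logistic_ineq hp0 hp1 h) (Real.exp_nonneg _)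
    have step4 : Real.exp (t * A) * Real.exp (p * h + h ^ 2 / 8)
        = Real.exp (t * m + t ^ 2 * (B - A) ^ 2 / 8) := by
      rw [← Real.exp_add]
      congr 1
      have : p * h = (m - A) * t := by
        rw [hp, hh]; field_simp
      rw [this, hh]
      ring
    calc mgf X μ t ≤ (B - m) / (B - A) * Real.exp (t * A)
          + (m - A) / (B - A) * Real.exp (t * B) := step1
      _ = Real.exp (t * A) * (1 - p + p * Real.exp h) := step2
      _ ≤ Real.exp (t * A) * Real.exp (p * h + h ^ 2 / 8) := step3
      _ = Real.exp (t * m + t ^ 2 * (B - A) ^ 2 / 8) := step4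

/-- Hoeffding's inequality, one-sided. -/
lemma hoeffding_ineq {Ω : Type*} [MeasurableSpace Ω] (μ : Measure Ω) [IsProbabilityMeasure μ]
    {n : ℕ} (Z : Fin n → Ω → ℝ) (hZm : ∀ j, Measurable (Z j))
    (hindep : iIndepFun Z μ)
    (l u : Fin n → ℝ) (hbdd : ∀ j, ∀ᵐ ω ∂μ, Z j ω ∈ Set.Icc (l j) (u j))
    (ε : ℝ) (hε : 0 < ε) :
    μ {ω | ε ≤ (∑ j, Z j ω) - ∑ j, ∫ ω', Z j ω' ∂μ} ≤
      ENNReal.ofReal (Real.exp (-2 * ε ^ 2 / ∑ j, (u j - l j) ^ 2)) := by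
  set D : ℝ := ∑ j, (u j - l j) ^ 2 with hD
  have hD0 : 0 ≤ D := Finset.sum_nonneg fun j _ => sq_nonneg _
  set m : ℝ := ∑ j, ∫ ω', Z j ω' ∂μ with hm
  rcases hD0.eq_or_lt with hDz | hDpos
  · rw [← hDz]
    simp only [div_zero, Real.exp_zero, ENNReal.ofReal_one]
    exact prob_le_one
  · set t : ℝ := 4 * ε / D with ht
    have ht0 : 0 ≤ t := by positivity
    have h_int : ∀ j ∈ Finset.univ, Integrable (fun ω => Real.exp (t * Z j ω)) μ :=
      fun j _ => integrable_exp_mul_of_bdd (hZm j) (hbdd j) t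
    have hSint := hindep.integrable_exp_mul_sum hZm h_int
    have chern := measure_ge_le_exp_mul_mgf (μ := μ) (X := ∑ j, Z j) (ε + m) ht0 hSint
    have hset : {ω | ε ≤ (∑ j, Z j ω) - m} = {ω | ε + m ≤ (∑ j, Z j) ω} := by
      ext ω
      simp only [Set.mem_setOf_eq, Finset.sum_apply]
      constructor <;> intro hh <;> linarith
    have hmgf : mgf (∑ j, Z j) μ t ≤ Real.exp (t * m + t ^ 2 * D / 8) := by
      rw [hindep.mgf_sum hZm]
      calc ∏ j, mgf (Z j) μ t
          ≤ ∏ j, Real.exp (t * (∫ ω', Z j ω' ∂μ) + t ^ 2 * (u j - l j) ^ 2 / 8) :=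
            Finset.prod_le_prod (fun j _ => mgf_nonneg)
              (fun j _ => hoeffding_lemma μ (hZm j) (hbdd j) t)
        _ = Real.exp (∑ j, (t * (∫ ω', Z j ω' ∂μ) + t ^ 2 * (u j - l j) ^ 2 / 8)) :=
            (Real.exp_sum _ _).symm
        _ = Real.exp (t * m + t ^ 2 * D / 8) := by
            rw [Finset.sum_add_distrib, ← Finset.mul_sum, ← hm, ← Finset.sum_div,
              ← Finset.mul_sum, ← hD]
    have key : (μ {ω | ε ≤ (∑ j, Z j ω) - m}).toReal ≤ Real.exp (-2 * ε ^ 2 / D) := by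
      rw [hset]
      calc (μ {ω | ε + m ≤ (∑ j, Z j) ω}).toReal
          ≤ Real.exp (-t * (ε + m)) * mgf (∑ j, Z j) μ t := chern
        _ ≤ Real.exp (-t * (ε + m)) * Real.exp (t * m + t ^ 2 * D / 8) :=
            mul_le_mul_of_nonneg_left hmgf (Real.exp_nonneg _)
        _ = Real.exp (-t * ε + t ^ 2 * D / 8) := by
            rw [← Real.exp_add]; congr 1; ring
        _ = Real.exp (-2 * ε ^ 2 / D) := by
            congr 1
            rw [ht]
            field_simp
            ring
    calc μ {ω | ε ≤ (∑ j, Z j ω) - m}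
        = ENNReal.ofReal ((μ {ω | ε ≤ (∑ j, Z j ω) - m}).toReal) :=
          (ENNReal.ofReal_toReal (measure_ne_top μ _)).symm
      _ ≤ ENNReal.ofReal (Real.exp (-2 * ε ^ 2 / D)) := ENNReal.ofReal_le_ofReal key

theorem concentration_of_row_sums
    (M N : ℕ) {Ω : Type*} [MeasurableSpace Ω] (μ : Measure Ω) [IsProbabilityMeasure μ]
    (At : Fin M → Fin N → Ω → ℝ)
    (aa bb : Fin M → Fin N → ℝ) (a b s C : ℝ)
    (A : Fin M → Fin N → ℝ)
    (x : Fin M → ℝ) (y : Fin N → ℝ) (r : Fin M → ℝ) (c : Fin N → ℝ)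
    (hmeas : ∀ i j, Measurable (At i j))
    (hrowIndep : ∀ i, iIndepFun (fun j => At i j) μ)
    (hcolIndep : ∀ j, iIndepFun (fun i => At i j) μ)
    (hbdd : ∀ i j, ∀ᵐ ω ∂μ, At i j ω ∈ Set.Icc (aa i j) (bb i j))
    (hE : ∀ i j, A i j = ∫ ω, At i j ω ∂μ)
    (ha : a = ⨅ p : Fin M × Fin N, aa p.1 p.2) (ha0 : 0 < a)
    (hb : b = ⨆ p : Fin M × Fin N, bb p.1 p.2)
    (hC : C = b / a ^ 2)
    (hr : ∀ i, 0 < r i) (hc : ∀ j, 0 < c j)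
    (hs_r : ∑ i, r i = s) (hs_c : ∑ j, c j = s)
    (hx : ∀ i, 0 < x i) (hy : ∀ j, 0 < y j)
    (hrow : ∀ i, ∑ j, x i * A i j * y j = r i)
    (hcol : ∀ j, ∑ i, x i * A i j * y j = c j) :
    ∀ ε > (0 : ℝ), ∀ i,
      μ {ω | ε < |(1 / r i) * ∑ j, x i * At i j ω * y j - 1|} ≤
        ENNReal.ofReal (2 * Real.exp
          (-2 * ε ^ 2 * s ^ 2 / (C ^ 2 * ∑ j, (c j) ^ 2 * (bb i j - aa i j) ^ 2))) := by
  intro ε hε i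
  -- N is positive
  have hN : 0 < N := by
    rcases Nat.eq_zero_or_pos N with h0 | h
    · exfalso
      have h1 := hrow i
      subst h0
      simp only [Finset.univ_eq_empty, Finset.sum_empty] at h1
      linarith [hr i]
    · exact h
  have hj0 : Nonempty (Fin N) := ⟨⟨0, hN⟩⟩
  haveI hMN : Nonempty (Fin M × Fin N) := ⟨(i, hj0.some)⟩
  -- basic bounds
  have ha_le : ∀ i' j, a ≤ aa i' j := by
    intro i' j
    rw [ha]
    exact ciInf_le (Set.Finite.bddBelow (Set.finite_range _)) (i', j)
  have hbb_le : ∀ i' j, bb i' j ≤ b := by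
    intro i' j
    rw [hb]
    exact le_ciSup (Set.Finite.bddAbove
      (Set.finite_range (fun p : Fin M × Fin N => bb p.1 p.2))) (i', j)
  have hint : ∀ i' j, Integrable (At i' j) μ :=
    fun i' j => integrable_of_bdd (hmeas i' j) (hbdd i' j)
  have hA_ge : ∀ i' j, aa i' j ≤ A i' j := by
    intro i' j
    rw [hE]
    have : (∫ _ : Ω, aa i' j ∂μ) ≤ ∫ ω, At i' j ω ∂μ := by
      apply integral_mono_ae (integrable_const _) (hint i' j)
      filter_upwards [hbdd i' j] with ω hω using hω.1
    simpa using this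
  have hA_le : ∀ i' j, A i' j ≤ bb i' j := by
    intro i' j
    rw [hE]
    have : (∫ ω, At i' j ω ∂μ) ≤ ∫ _ : Ω, bb i' j ∂μ := by
      apply integral_mono_ae (hint i' j) (integrable_const _)
      filter_upwards [hbdd i' j] with ω hω using hω.2
    simpa using this
  have hab : ∀ i' j, aa i' j ≤ bb i' j := fun i' j => le_trans (hA_ge i' j) (hA_le i' j)
  have hb0 : 0 < b := lt_of_lt_of_le ha0
    (le_trans (ha_le i hj0.some) (le_trans (hab i hj0.some) (hbb_le i hj0.some)))
  have hC0 : 0 < C := by rw [hC]; positivity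
  have hs0 : 0 < s := by rw [← hs_r]; exact Finset.sum_pos (fun i' _ => hr i') ⟨i, mem_univ i⟩
  set Sx : ℝ := ∑ i', x i' with hSx
  set Sy : ℝ := ∑ j, y j with hSy
  have hSx0 : 0 < Sx := Finset.sum_pos (fun i' _ => hx i') ⟨i, mem_univ i⟩
  have hSy0 : 0 < Sy := Finset.sum_pos (fun j _ => hy j) ⟨hj0.some, mem_univ _⟩
  -- scaling bounds
  have key1 : a * (x i * Sy) ≤ r i := by
    rw [← hrow i]
    have h1 : ∀ j ∈ Finset.univ, x i * a * y j ≤ x i * A i j * y j := by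
      intro j _
      have haA : a ≤ A i j := le_trans (ha_le i j) (hA_ge i j)
      exact mul_le_mul_of_nonneg_right (mul_le_mul_of_nonneg_left haA (hx i).le) (hy j).le
    calc a * (x i * Sy) = ∑ j, x i * a * y j := by
          rw [hSy, Finset.mul_sum, Finset.mul_sum]
          exact Finset.sum_congr rfl fun j _ => by ring
      _ ≤ ∑ j, x i * A i j * y j := Finset.sum_le_sum h1
  have key2 : ∀ j, a * (y j * Sx) ≤ c j := by
    intro j
    rw [← hcol j]
    have h1 : ∀ i' ∈ Finset.univ, x i' * a * y j ≤ x i' * A i' j * y j := by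
      intro i' _
      have haA : a ≤ A i' j := le_trans (ha_le i' j) (hA_ge i' j)
      exact mul_le_mul_of_nonneg_right (mul_le_mul_of_nonneg_left haA (hx i').le) (hy j).le
    calc a * (y j * Sx) = ∑ i', x i' * a * y j := by
          rw [hSx, Finset.mul_sum, Finset.mul_sum]
          exact Finset.sum_congr rfl fun i' _ => by ring
      _ ≤ ∑ i', x i' * A i' j * y j := Finset.sum_le_sum h1
  have key3 : s ≤ b * (Sx * Sy) := by
    rw [← hs_c]
    have h1 : ∀ j ∈ Finset.univ, c j ≤ b * Sx * y j := by
      intro j _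
      rw [← hcol j]
      have h2 : ∀ i' ∈ Finset.univ, x i' * A i' j * y j ≤ x i' * b * y j := by
        intro i' _
        have hAb : A i' j ≤ b := le_trans (hA_le i' j) (hbb_le i' j)
        exact mul_le_mul_of_nonneg_right (mul_le_mul_of_nonneg_left hAb (hx i').le) (hy j).le
      calc ∑ i', x i' * A i' j * y j ≤ ∑ i', x i' * b * y j := Finset.sum_le_sum h2
        _ = b * Sx * y j := by
            simp only [hSx, Finset.mul_sum, Finset.sum_mul]
            exact Finset.sum_congr rfl fun i' _ => by ring
    calc ∑ j, c j ≤ ∑ j, b * Sx * y j := Finset.sum_le_sum h1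
      _ = b * (Sx * Sy) := by
          simp only [hSy, Finset.mul_sum, Finset.sum_mul]
          exact Finset.sum_congr rfl fun j _ => by ring
  have hCa : C * a ^ 2 = b := by rw [hC]; field_simp
  have scaling : ∀ j, x i * y j * s ≤ C * (r i * c j) := by
    intro j
    have hprod : (a * (x i * Sy)) * (a * (y j * Sx)) ≤ r i * c j :=
      mul_le_mul key1 (key2 j)
        (mul_nonneg ha0.le (mul_nonneg (hy j).le hSx0.le)) (hr i).le
    calc x i * y j * s ≤ x i * y j * (b * (Sx * Sy)) := by
          apply mul_le_mul_of_nonneg_left key3 (mul_nonneg (hx i).le (hy j).le)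
      _ = C * ((a * (x i * Sy)) * (a * (y j * Sx))) := by rw [← hCa]; ring
      _ ≤ C * (r i * c j) := mul_le_mul_of_nonneg_left hprod hC0.le
  -- the random variables
  set k : Fin N → ℝ := fun j => x i * y j / r i with hk
  have hk0 : ∀ j, 0 < k j := fun j => by
    simp only [k]; exact div_pos (mul_pos (hx i) (hy j)) (hr i)
  set Z : Fin N → Ω → ℝ := fun j ω => k j * At i j ω with hZ
  have hZm : ∀ j, Measurable (Z j) := fun j => (hmeas i j).const_mul _
  have hZindep : iIndepFun Z μ :=
    (hrowIndep i).comp (fun j v => k j * v) (fun j => measurable_const_mul _)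
  have hZbdd : ∀ j, ∀ᵐ ω ∂μ, Z j ω ∈ Set.Icc (k j * aa i j) (k j * bb i j) := by
    intro j
    filter_upwards [hbdd i j] with ω hω
    exact ⟨mul_le_mul_of_nonneg_left hω.1 (hk0 j).le,
      mul_le_mul_of_nonneg_left hω.2 (hk0 j).le⟩
  have hZint : ∀ j, (∫ ω', Z j ω' ∂μ) = k j * A i j := by
    intro j
    rw [hE]
    exact integral_const_mul _ _
  have hmean : (∑ j, ∫ ω', Z j ω' ∂μ) = 1 := by
    have : (∑ j, ∫ ω', Z j ω' ∂μ) = (∑ j, x i * A i j * y j) / r i := by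
      rw [Finset.sum_div]
      apply Finset.sum_congr rfl
      intro j _
      rw [hZint j]
      simp only [k]
      ring
    rw [this, hrow i, div_self (hr i).ne']
  -- the negated variables
  set W : Fin N → Ω → ℝ := fun j ω => -(Z j ω) with hW
  have hWm : ∀ j, Measurable (W j) := fun j => (hZm j).neg
  have hWindep : iIndepFun W μ :=
    hZindep.comp (fun _ v => -v) (fun _ => measurable_neg)
  have hWbdd : ∀ j, ∀ᵐ ω ∂μ, W j ω ∈ Set.Icc (-(k j * bb i j)) (-(k j * aa i j)) := by
    intro j
    filter_upwards [hZbdd j] with ω hω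
    exact ⟨neg_le_neg hω.2, neg_le_neg hω.1⟩
  have hWmean : (∑ j, ∫ ω', W j ω' ∂μ) = -1 := by
    have : ∀ j, (∫ ω', W j ω' ∂μ) = -(∫ ω', Z j ω' ∂μ) := by
      intro j
      exact integral_neg _
    simp_rw [this]
    rw [Finset.sum_neg_distrib, hmean]
  -- tail bounds
  have hboundZ := hoeffding_ineq μ Z hZm hZindep _ _ hZbdd ε hε
  have hboundW := hoeffding_ineq μ W hWm hWindep _ _ hWbdd ε hε
  rw [hmean] at hboundZ
  rw [hWmean] at hboundW
  -- exponents
  set DZ : ℝ := ∑ j, (k j * bb i j - k j * aa i j) ^ 2 with hDZ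
  have hDW : (∑ j, (-(k j * aa i j) - -(k j * bb i j)) ^ 2) = DZ := by
    apply Finset.sum_congr rfl
    intro j _
    ring
  rw [hDW] at hboundW
  set T : ℝ := ∑ j, (c j) ^ 2 * (bb i j - aa i j) ^ 2 with hT
  -- compare exponents
  have hexp : Real.exp (-2 * ε ^ 2 / DZ) ≤
      Real.exp (-2 * ε ^ 2 * s ^ 2 / (C ^ 2 * T)) := by
    have hT0 : 0 ≤ T := Finset.sum_nonneg fun j _ => by positivity
    rcases hT0.eq_or_lt with hTz | hTpos
    · -- T = 0 : every bb = aa, so DZ = 0 and both exponents are 0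
      have hterm : ∀ j ∈ Finset.univ, (c j) ^ 2 * (bb i j - aa i j) ^ 2 = 0 := by
        rw [← Finset.sum_eq_zero_iff_of_nonneg (fun j _ => by positivity)]
        exact hTz.symm
      have hba : ∀ j, bb i j = aa i j := by
        intro j
        have := hterm j (mem_univ j)
        have hcj : (c j) ^ 2 ≠ 0 := pow_ne_zero 2 (hc j).ne'
        have : (bb i j - aa i j) ^ 2 = 0 := by
          rcases mul_eq_zero.1 this with h | h
          · exact absurd h hcj
          · exact h
        have := pow_eq_zero_iff (n := 2) (by norm_num) |>.1 this
        linarith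
      have hDZz : DZ = 0 := by
        rw [hDZ]
        apply Finset.sum_eq_zero
        intro j _
        rw [hba j]
        ring
      rw [hDZz, ← hTz, mul_zero, div_zero, div_zero]
    · -- T > 0 : DZ > 0 and exponent comparison via the scaling bound
      have hDZpos : 0 < DZ := by
        have hne : ∃ j, (c j) ^ 2 * (bb i j - aa i j) ^ 2 ≠ 0 := by
          by_contra hcon
          push_neg at hcon
          have : T = 0 := Finset.sum_eq_zero fun j _ => hcon j
          linarith
        obtain ⟨j, hj⟩ := hne
        have hbaj : bb i j ≠ aa i j := by
          intro hcon
          apply hj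
          rw [hcon]
          ring
        apply Finset.sum_pos' (fun j' _ => sq_nonneg _) ⟨j, mem_univ j, ?_⟩
        have hne0 : k j * bb i j - k j * aa i j ≠ 0 := by
          intro hcon
          apply hbaj
          have h2 : k j * (bb i j - aa i j) = 0 := by linear_combination hcon
          rcases mul_eq_zero.1 h2 with h | h
          · exact absurd h (hk0 j).ne'
          · linarith
        positivity
      have hCT : 0 < C ^ 2 * T := mul_pos (pow_pos hC0 2) hTpos
      apply Real.exp_le_exp.2
      rw [div_le_div_iff₀ hDZpos hCT]
      have hmain : s ^ 2 * DZ ≤ C ^ 2 * T := by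
        have hterm : ∀ j ∈ Finset.univ,
            s ^ 2 * (k j * bb i j - k j * aa i j) ^ 2 ≤
            C ^ 2 * ((c j) ^ 2 * (bb i j - aa i j) ^ 2) := by
          intro j _
          have hsc := scaling j
          have hks : k j * s ≤ C * c j := by
            rw [hk, div_mul_eq_mul_div, div_le_iff₀ (hr i)]
            calc x i * y j * s ≤ C * (r i * c j) := hsc
              _ = C * c j * r i := by ring
          have h1 : (k j * s) ^ 2 ≤ (C * c j) ^ 2 := by
            apply pow_le_pow_left₀ (mul_nonneg (hk0 j).le hs0.le) hks
          calc s ^ 2 * (k j * bb i j - k j * aa i j) ^ 2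
              = (k j * s) ^ 2 * (bb i j - aa i j) ^ 2 := by ring
            _ ≤ (C * c j) ^ 2 * (bb i j - aa i j) ^ 2 :=
              mul_le_mul_of_nonneg_right h1 (sq_nonneg _)
            _ = C ^ 2 * ((c j) ^ 2 * (bb i j - aa i j) ^ 2) := by ring
        calc s ^ 2 * DZ = ∑ j, s ^ 2 * (k j * bb i j - k j * aa i j) ^ 2 := by
              rw [hDZ, Finset.mul_sum]
          _ ≤ ∑ j, C ^ 2 * ((c j) ^ 2 * (bb i j - aa i j) ^ 2) := Finset.sum_le_sum hterm
          _ = C ^ 2 * T := by rw [hT, Finset.mul_sum]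
      have h2 := mul_le_mul_of_nonneg_left hmain (show (0:ℝ) ≤ 2 * ε ^ 2 by positivity)
      nlinarith [h2]
  -- event manipulation
  have hS : ∀ ω, (1 / r i) * ∑ j, x i * At i j ω * y j = ∑ j, Z j ω := by
    intro ω
    rw [Finset.mul_sum]
    apply Finset.sum_congr rfl
    intro j _
    simp only [Z, k]
    ring
  have hsetEq : {ω | ε < |(1 / r i) * ∑ j, x i * At i j ω * y j - 1|}
      = {ω | ε < |(∑ j, Z j ω) - 1|} := by
    ext ω
    rw [Set.mem_setOf_eq, Set.mem_setOf_eq, hS ω]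
  have hsub : {ω | ε < |(∑ j, Z j ω) - 1|} ⊆
      {ω | ε ≤ (∑ j, Z j ω) - 1} ∪ {ω | ε ≤ (∑ j, W j ω) - (-1)} := by
    intro ω hω
    rw [Set.mem_setOf_eq] at hω
    rcases lt_abs.1 hω with h | h
    · left
      exact le_of_lt h
    · right
      rw [Set.mem_setOf_eq]
      have hWZ : (∑ j, W j ω) = -(∑ j, Z j ω) := by
        simp only [W]
        rw [Finset.sum_neg_distrib]
      rw [hWZ]
      linarith
  calc μ {ω | ε < |(1 / r i) * ∑ j, x i * At i j ω * y j - 1|}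
      ≤ μ ({ω | ε ≤ (∑ j, Z j ω) - 1} ∪ {ω | ε ≤ (∑ j, W j ω) - (-1)}) := by
        rw [hsetEq]; exact measure_mono hsub
    _ ≤ μ {ω | ε ≤ (∑ j, Z j ω) - 1} + μ {ω | ε ≤ (∑ j, W j ω) - (-1)} := measure_union_le _ _
    _ ≤ ENNReal.ofReal (Real.exp (-2 * ε ^ 2 / DZ)) +
        ENNReal.ofReal (Real.exp (-2 * ε ^ 2 / DZ)) := add_le_add hboundZ hboundW
    _ = ENNReal.ofReal (2 * Real.exp (-2 * ε ^ 2 / DZ)) := by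
        rw [← ENNReal.ofReal_add (Real.exp_nonneg _) (Real.exp_nonneg _), two_mul]
    _ ≤ ENNReal.ofReal (2 * Real.exp (-2 * ε ^ 2 * s ^ 2 / (C ^ 2 * T))) := by
        apply ENNReal.ofReal_le_ofReal
        linarith [hexp]
end

section
/- If positive vectors x, y scale a matrix A with entries in [a,b] (0 < a ≤ b) to row sums r and column sums c with ‖r‖₁ = ‖c‖₁ = s, then for all i, j: x_i y_j ≤ (b/a²) · (r_i c_j)/s. -/
open Finset

theorem scaling_factors_product_bound
    (M N : ℕ) (A : Fin M → Fin N → ℝ) (a b s : ℝ)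
    (x : Fin M → ℝ) (y : Fin N → ℝ) (r : Fin M → ℝ) (c : Fin N → ℝ)
    (ha : 0 < a) (hab : a ≤ b)
    (hA : ∀ i j, a ≤ A i j ∧ A i j ≤ b)
    (hr : ∀ i, 0 < r i) (hc : ∀ j, 0 < c j)
    (hs_r : ∑ i, r i = s) (hs_c : ∑ j, c j = s)
    (hx : ∀ i, 0 < x i) (hy : ∀ j, 0 < y j)
    (hrow : ∀ i, ∑ j, x i * A i j * y j = r i)
    (hcol : ∀ j, ∑ i, x i * A i j * y j = c j) :
    ∀ i j, x i * y j ≤ (b / a ^ 2) * (r i * c j) / s := by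
  intro i j
  have hent_lo : ∀ i j, x i * a * y j ≤ x i * A i j * y j := fun i j =>
    mul_le_mul_of_nonneg_right
      (mul_le_mul_of_nonneg_left (hA i j).1 (hx i).le) (hy j).le
  have hent_hi : ∀ i j, x i * A i j * y j ≤ x i * b * y j := fun i j =>
    mul_le_mul_of_nonneg_right
      (mul_le_mul_of_nonneg_left (hA i j).2 (hx i).le) (hy j).le
  set X := ∑ i, x i with hX
  set Y := ∑ j, y j with hY
  have hXpos : 0 < X := Finset.sum_pos (fun i _ => hx i) ⟨i, mem_univ i⟩
  have hYpos : 0 < Y := Finset.sum_pos (fun j _ => hy j) ⟨j, mem_univ j⟩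
  have h1 : x i * a * Y ≤ r i := by
    rw [← hrow i, hY, Finset.mul_sum]
    exact Finset.sum_le_sum fun k _ => hent_lo i k
  have h2 : a * y j * X ≤ c j := by
    rw [← hcol j, hX, Finset.mul_sum]
    refine Finset.sum_le_sum fun k _ => ?_
    have := hent_lo k j
    linarith
  have h3 : s ≤ b * X * Y := by
    rw [← hs_r]
    calc ∑ i, r i ≤ ∑ i, x i * b * Y := by
          refine Finset.sum_le_sum fun i _ => ?_
          rw [← hrow i, hY, Finset.mul_sum]
          exact Finset.sum_le_sum fun k _ => hent_hi i k
      _ = b * X * Y := by rw [hX, ← Finset.sum_mul, ← Finset.sum_mul]; ring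
  have hspos : 0 < s := by
    rw [← hs_r]; exact Finset.sum_pos (fun i _ => hr i) ⟨i, mem_univ i⟩
  have key : a ^ 2 * (x i * y j) * s ≤ b * (r i * c j) := by
    have m1 : (x i * a * Y) * (a * y j * X) ≤ r i * c j :=
      mul_le_mul h1 h2
        (mul_nonneg (mul_nonneg ha.le (hy j).le) hXpos.le) (hr i).le
    have m2 : a ^ 2 * (x i * y j) * s ≤ a ^ 2 * (x i * y j) * (b * X * Y) :=
      mul_le_mul_of_nonneg_left h3 (mul_nonneg (sq_nonneg a) (mul_nonneg (hx i).le (hy j).le))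
    nlinarith [mul_le_mul_of_nonneg_left m1 (le_trans ha.le hab)]
  rw [div_mul_eq_mul_div, div_div, le_div_iff₀ (by positivity)]
  nlinarith [key]
end

section
/- If positive vectors x, y (with ∑_i x_i = ∑_j y_j) scale a matrix A with entries in [a,b], 0 < a ≤ b, to row sums r and column sums c with ‖r‖₁=‖c‖₁=s, and positive vectors x̃, ỹ (with ∑_i x̃_i = ∑_j ỹ_j) scale another matrix Ã with entries in [a,b] to the same row and column sums, then x̃_i/x_i ≤ (b/a)^{3/2} and ỹ_j/y_j ≤ (b/a)^{3/2} for all i, j. -/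
open Finset

lemma key_ratio_bound (a b u ut v vt ρ : ℝ) (ha : 0 < a) (hab : a ≤ b)
    (hu : 0 < u) (hut : 0 < ut) (hv : 0 < v) (hvt : 0 < vt)
    (h1 : ρ ≤ u * (b * v)) (h2 : ut * (a * vt) ≤ ρ)
    (h3 : a * v ^ 2 ≤ b * vt ^ 2) :
    ut / u ≤ (b / a) ^ ((3 : ℝ) / 2) := by
  have hb : 0 < b := lt_of_lt_of_le ha hab
  have h5 : (b / a) ^ ((3 : ℝ) / 2) = Real.sqrt ((b / a) ^ 3) := by
    rw [Real.sqrt_eq_rpow, ← Real.rpow_natCast (b / a) 3,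
      ← Real.rpow_mul (by positivity)]
    norm_num
  rw [h5, Real.le_sqrt (by positivity) (by positivity)]
  have hk : ut * (a * vt) ≤ u * (b * v) := h2.trans h1
  have hk2 : (ut * (a * vt)) * (ut * (a * vt)) ≤ (u * (b * v)) * (u * (b * v)) :=
    mul_le_mul hk hk (by positivity) (by positivity)
  rw [div_pow, div_pow, div_le_div_iff₀ (by positivity) (by positivity)]
  nlinarith [mul_pos hvt hvt, mul_pos hu hu, mul_pos ha hb,
    mul_le_mul_of_nonneg_left h3 (mul_pos (mul_pos hu hu) (mul_pos hb hb)).le,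
    sq_nonneg vt]

theorem ratio_of_scaling_factors_bound
    (M N : ℕ) (A At : Fin M → Fin N → ℝ) (a b s : ℝ)
    (x xt : Fin M → ℝ) (y yt : Fin N → ℝ) (r : Fin M → ℝ) (c : Fin N → ℝ)
    (ha : 0 < a) (hab : a ≤ b)
    (hA : ∀ i j, a ≤ A i j ∧ A i j ≤ b)
    (hAt : ∀ i j, a ≤ At i j ∧ At i j ≤ b)
    (hr : ∀ i, 0 < r i) (hc : ∀ j, 0 < c j)
    (hs_r : ∑ i, r i = s) (hs_c : ∑ j, c j = s)
    (hx : ∀ i, 0 < x i) (hy : ∀ j, 0 < y j)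
    (hxt : ∀ i, 0 < xt i) (hyt : ∀ j, 0 < yt j)
    (hnorm : ∑ i, x i = ∑ j, y j)
    (hnormt : ∑ i, xt i = ∑ j, yt j)
    (hrow : ∀ i, ∑ j, x i * A i j * y j = r i)
    (hcol : ∀ j, ∑ i, x i * A i j * y j = c j)
    (hrowt : ∀ i, ∑ j, xt i * At i j * yt j = r i)
    (hcolt : ∀ j, ∑ i, xt i * At i j * yt j = c j) :
    (∀ i, xt i / x i ≤ (b / a) ^ ((3 : ℝ) / 2)) ∧
    (∀ j, yt j / y j ≤ (b / a) ^ ((3 : ℝ) / 2)) := by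
  have hb : 0 < b := lt_of_lt_of_le ha hab
  set X := ∑ i, x i with hX
  set Y := ∑ j, y j with hY
  set Xt := ∑ i, xt i with hXt
  set Yt := ∑ j, yt j with hYt
  -- generic per-row bounds
  have hrow_ub : ∀ i, r i ≤ x i * (b * Y) := by
    intro i
    rw [← hrow i]
    calc ∑ j, x i * A i j * y j ≤ ∑ j, x i * b * y j :=
          Finset.sum_le_sum fun j _ => by
            exact mul_le_mul_of_nonneg_right
              (mul_le_mul_of_nonneg_left (hA i j).2 (hx i).le) (hy j).le
      _ = x i * (b * Y) := by
          rw [hY, Finset.mul_sum, Finset.mul_sum]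
          exact (Finset.sum_congr rfl fun j _ => by ring).symm
  have hrow_lb : ∀ i, x i * (a * Y) ≤ r i := by
    intro i
    rw [← hrow i]
    calc x i * (a * Y) = ∑ j, x i * a * y j := by
          rw [hY, Finset.mul_sum, Finset.mul_sum]
          exact Finset.sum_congr rfl fun j _ => by ring
      _ ≤ ∑ j, x i * A i j * y j :=
          Finset.sum_le_sum fun j _ => by
            exact mul_le_mul_of_nonneg_right
              (mul_le_mul_of_nonneg_left (hA i j).1 (hx i).le) (hy j).le
  have hrowt_ub : ∀ i, r i ≤ xt i * (b * Yt) := by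
    intro i
    rw [← hrowt i]
    calc ∑ j, xt i * At i j * yt j ≤ ∑ j, xt i * b * yt j :=
          Finset.sum_le_sum fun j _ => by
            exact mul_le_mul_of_nonneg_right
              (mul_le_mul_of_nonneg_left (hAt i j).2 (hxt i).le) (hyt j).le
      _ = xt i * (b * Yt) := by
          rw [hYt, Finset.mul_sum, Finset.mul_sum]
          exact (Finset.sum_congr rfl fun j _ => by ring).symm
  have hrowt_lb : ∀ i, xt i * (a * Yt) ≤ r i := by
    intro i
    rw [← hrowt i]
    calc xt i * (a * Yt) = ∑ j, xt i * a * yt j := by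
          rw [hYt, Finset.mul_sum, Finset.mul_sum]
          exact Finset.sum_congr rfl fun j _ => by ring
      _ ≤ ∑ j, xt i * At i j * yt j :=
          Finset.sum_le_sum fun j _ => by
            exact mul_le_mul_of_nonneg_right
              (mul_le_mul_of_nonneg_left (hAt i j).1 (hxt i).le) (hyt j).le
  -- column bounds
  have hcol_ub : ∀ j, c j ≤ y j * (b * X) := by
    intro j
    rw [← hcol j]
    calc ∑ i, x i * A i j * y j ≤ ∑ i, x i * b * y j :=
          Finset.sum_le_sum fun i _ => by
            exact mul_le_mul_of_nonneg_right
              (mul_le_mul_of_nonneg_left (hA i j).2 (hx i).le) (hy j).le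
      _ = y j * (b * X) := by
          rw [hX, Finset.mul_sum, Finset.mul_sum]
          exact (Finset.sum_congr rfl fun i _ => by ring).symm
  have hcolt_lb : ∀ j, yt j * (a * Xt) ≤ c j := by
    intro j
    rw [← hcolt j]
    calc yt j * (a * Xt) = ∑ i, xt i * a * yt j := by
          rw [hXt, Finset.mul_sum, Finset.mul_sum]
          exact Finset.sum_congr rfl fun i _ => by ring
      _ ≤ ∑ i, xt i * At i j * yt j :=
          Finset.sum_le_sum fun i _ => by
            exact mul_le_mul_of_nonneg_right
              (mul_le_mul_of_nonneg_left (hAt i j).1 (hxt i).le) (hyt j).le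
  -- total mass bounds
  have hsY : a * Y ^ 2 ≤ s := by
    have := Finset.sum_le_sum (fun i (_ : i ∈ Finset.univ) => hrow_lb i)
    rw [hs_r] at this
    calc a * Y ^ 2 = X * (a * Y) := by rw [hnorm]; ring
      _ = ∑ i, x i * (a * Y) := by rw [hX, Finset.sum_mul]
      _ ≤ s := this
  have hsYt : s ≤ b * Yt ^ 2 := by
    have := Finset.sum_le_sum (fun i (_ : i ∈ Finset.univ) => hrowt_ub i)
    rw [hs_r] at this
    calc s ≤ ∑ i, xt i * (b * Yt) := this
      _ = Xt * (b * Yt) := by rw [hXt, Finset.sum_mul]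
      _ = b * Yt ^ 2 := by rw [hnormt]; ring
  have hmass : a * Y ^ 2 ≤ b * Yt ^ 2 := hsY.trans hsYt
  constructor
  · intro i
    have hN : Nonempty (Fin N) := by
      rcases isEmpty_or_nonempty (Fin N) with h | h
      · exfalso
        have h0 := hrow i
        simp at h0
        exact (hr i).ne' h0.symm
      · exact h
    have hYpos : 0 < Y := Finset.sum_pos (fun j _ => hy j) Finset.univ_nonempty
    have hYtpos : 0 < Yt := Finset.sum_pos (fun j _ => hyt j) Finset.univ_nonempty
    exact key_ratio_bound a b (x i) (xt i) Y Yt (r i) ha hab (hx i) (hxt i)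
      hYpos hYtpos (hrow_ub i) (hrowt_lb i) hmass
  · intro j
    have hM : Nonempty (Fin M) := by
      rcases isEmpty_or_nonempty (Fin M) with h | h
      · exfalso
        have h0 := hcol j
        simp at h0
        exact (hc j).ne' h0.symm
      · exact h
    have hXpos : 0 < X := Finset.sum_pos (fun i _ => hx i) Finset.univ_nonempty
    have hXtpos : 0 < Xt := Finset.sum_pos (fun i _ => hxt i) Finset.univ_nonempty
    have hmass' : a * X ^ 2 ≤ b * Xt ^ 2 := by
      rw [hnorm, hnormt]; exact hmass
    exact key_ratio_bound a b (y j) (yt j) X Xt (c j) ha hab (hy j) (hyt j)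
      hXpos hXtpos (hcol_ub j) (hcolt_lb j) hmass'
end

section
/- Let P̃ = D(x̃) Ã D(ỹ) and P = D(x) A D(y) where Ã, A have entries in [a,b], 0 < a ≤ b, and both matrices are scaled (by positive factor pairs) to row sums r and column sums c with ‖r‖₁ = ‖c‖₁ = s. Then ‖P̃ − P‖₂ ≤ 2(b/a)² · ‖r‖₂‖c‖₂/s ≤ 2(b/a)² · √M max_i r_i · √N max_j c_j / s. -/
open Finset
open scoped Matrix.Norms.L2Operator

/-- The L2 operator norm is at most the Frobenius norm. -/
lemma l2_opNorm_le_frob {M N : ℕ} (D : Matrix (Fin M) (Fin N) ℝ) :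
    ‖D‖ ≤ Real.sqrt (∑ i, ∑ j, D i j ^ 2) := by
  rw [Matrix.l2_opNorm_def]
  refine ContinuousLinearMap.opNorm_le_bound _ (Real.sqrt_nonneg _) fun v => ?_
  have hv : ‖v‖ = Real.sqrt (∑ j, v j ^ 2) := by
    rw [EuclideanSpace.norm_eq]
    congr 1; refine Finset.sum_congr rfl fun j _ => ?_
    rw [Real.norm_eq_abs, sq_abs]
  have hentry : ∀ i, ((Matrix.toEuclideanLin.trans LinearMap.toContinuousLinearMap D) v) i
      = ∑ j, D i j * v j := fun i => rfl
  have happ : ‖(Matrix.toEuclideanLin.trans LinearMap.toContinuousLinearMap D) v‖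
      = Real.sqrt (∑ i, (∑ j, D i j * v j) ^ 2) := by
    rw [EuclideanSpace.norm_eq]
    congr 1; refine Finset.sum_congr rfl fun i _ => ?_
    rw [hentry, Real.norm_eq_abs, sq_abs]
  rw [happ, hv, ← Real.sqrt_mul (by positivity)]
  apply Real.sqrt_le_sqrt
  rw [Finset.sum_mul]
  refine Finset.sum_le_sum fun i _ => ?_
  exact Finset.sum_mul_sq_le_sq_mul_sq _ _ _

/-- Entrywise bound for a scaled matrix. -/
lemma entry_bound {M N : ℕ} (hM : 0 < M) (hN : 0 < N)
    (A : Fin M → Fin N → ℝ) (a b s : ℝ)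
    (x : Fin M → ℝ) (y : Fin N → ℝ) (r : Fin M → ℝ) (c : Fin N → ℝ)
    (ha : 0 < a) (hab : a ≤ b)
    (hA : ∀ i j, a ≤ A i j ∧ A i j ≤ b)
    (hr : ∀ i, 0 < r i) (hc : ∀ j, 0 < c j)
    (hs_c : ∑ j, c j = s)
    (hx : ∀ i, 0 < x i) (hy : ∀ j, 0 < y j)
    (hrow : ∀ i, ∑ j, x i * A i j * y j = r i)
    (hcol : ∀ j, ∑ i, x i * A i j * y j = c j) :
    ∀ i j, x i * A i j * y j ≤ (b / a) ^ 2 * r i * c j / s := by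
  intro i j
  have hs : 0 < s := hs_c ▸ Finset.sum_pos (fun j _ => hc j) ⟨⟨0, hN⟩, Finset.mem_univ _⟩
  set Sx := ∑ i, x i with hSx
  set Sy := ∑ j, y j with hSy
  have hSxp : 0 < Sx := Finset.sum_pos (fun i _ => hx i) ⟨⟨0, hM⟩, Finset.mem_univ _⟩
  have hSyp : 0 < Sy := Finset.sum_pos (fun j _ => hy j) ⟨⟨0, hN⟩, Finset.mem_univ _⟩
  -- x i ≤ r i / (a * Sy)
  have hxi : x i * (a * Sy) ≤ r i := by
    rw [← hrow i]
    calc x i * (a * Sy) = ∑ j, x i * a * y j := by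
          simp only [hSy, Finset.mul_sum]
          exact Finset.sum_congr rfl fun _ _ => by ring
      _ ≤ ∑ j, x i * A i j * y j := Finset.sum_le_sum fun j _ =>
          mul_le_mul_of_nonneg_right
            (mul_le_mul_of_nonneg_left (hA i j).1 (hx i).le) (hy j).le
  have hyj : y j * (a * Sx) ≤ c j := by
    rw [← hcol j]
    calc y j * (a * Sx) = ∑ i, x i * a * y j := by
          simp only [hSx, Finset.mul_sum]
          exact Finset.sum_congr rfl fun _ _ => by ring
      _ ≤ ∑ i, x i * A i j * y j := Finset.sum_le_sum fun i _ =>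
          mul_le_mul_of_nonneg_right
            (mul_le_mul_of_nonneg_left (hA i j).1 (hx i).le) (hy j).le
  have hsle : s ≤ b * (Sx * Sy) := by
    rw [← hs_c]
    calc ∑ j, c j = ∑ j, ∑ i, x i * A i j * y j := by
          exact Finset.sum_congr rfl fun j _ => (hcol j).symm
      _ ≤ ∑ j, ∑ i, x i * b * y j := by
          refine Finset.sum_le_sum fun j _ => Finset.sum_le_sum fun i _ =>
            mul_le_mul_of_nonneg_right
              (mul_le_mul_of_nonneg_left (hA i j).2 (hx i).le) (hy j).le
      _ = b * (Sx * Sy) := by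
          simp_rw [hSx, hSy, Finset.sum_mul, Finset.mul_sum]
          rw [Finset.sum_comm]
          congr 1; ext i; congr 1; ext j; ring
  have hxib : x i ≤ r i / (a * Sy) := (le_div_iff₀ (by positivity)).2 hxi
  have hyjb : y j ≤ c j / (a * Sx) := (le_div_iff₀ (by positivity)).2 hyj
  have hb : 0 < b := lt_of_lt_of_le ha hab
  calc x i * A i j * y j ≤ x i * b * y j :=
        mul_le_mul_of_nonneg_right
          (mul_le_mul_of_nonneg_left (hA i j).2 (hx i).le) (hy j).le
    _ ≤ (r i / (a * Sy)) * b * (c j / (a * Sx)) := by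
        apply mul_le_mul _ hyjb (hy j).le
          (mul_nonneg (div_nonneg (hr i).le (by positivity)) hb.le)
        exact mul_le_mul_of_nonneg_right hxib hb.le
    _ = b * r i * c j / (a ^ 2 * (Sx * Sy)) := by field_simp
    _ ≤ b * r i * c j / (a ^ 2 * (s / b)) := by
        apply div_le_div_of_nonneg_left
          (mul_nonneg (mul_nonneg hb.le (hr i).le) (hc j).le) (by positivity)
        apply mul_le_mul_of_nonneg_left _ (by positivity)
        exact (div_le_iff₀ hb).2 (by linarith [hsle])
    _ = (b / a) ^ 2 * r i * c j / s := by field_simp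

theorem opNorm_diff_of_scaled_matrices_bound
    (M N : ℕ) (hM : 0 < M) (hN : 0 < N)
    (A At : Fin M → Fin N → ℝ) (a b s : ℝ)
    (x xt : Fin M → ℝ) (y yt : Fin N → ℝ) (r : Fin M → ℝ) (c : Fin N → ℝ)
    (ha : 0 < a) (hab : a ≤ b)
    (hA : ∀ i j, a ≤ A i j ∧ A i j ≤ b)
    (hAt : ∀ i j, a ≤ At i j ∧ At i j ≤ b)
    (hr : ∀ i, 0 < r i) (hc : ∀ j, 0 < c j)
    (hs_r : ∑ i, r i = s) (hs_c : ∑ j, c j = s)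
    (hx : ∀ i, 0 < x i) (hy : ∀ j, 0 < y j)
    (hxt : ∀ i, 0 < xt i) (hyt : ∀ j, 0 < yt j)
    (hrow : ∀ i, ∑ j, x i * A i j * y j = r i)
    (hcol : ∀ j, ∑ i, x i * A i j * y j = c j)
    (hrowt : ∀ i, ∑ j, xt i * At i j * yt j = r i)
    (hcolt : ∀ j, ∑ i, xt i * At i j * yt j = c j) :
    ‖(Matrix.of fun i j => xt i * At i j * yt j) -
        (Matrix.of fun i j => x i * A i j * y j)‖ ≤
      2 * (b / a) ^ 2 * (Real.sqrt (∑ i, r i ^ 2) * Real.sqrt (∑ j, c j ^ 2)) / s ∧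
    2 * (b / a) ^ 2 * (Real.sqrt (∑ i, r i ^ 2) * Real.sqrt (∑ j, c j ^ 2)) / s ≤
      2 * (b / a) ^ 2 * (Real.sqrt M * (⨆ i, r i) * (Real.sqrt N * ⨆ j, c j)) / s := by
  have hs : 0 < s := hs_c ▸ Finset.sum_pos (fun j _ => hc j) ⟨⟨0, hN⟩, Finset.mem_univ _⟩
  have hb : 0 < b := lt_of_lt_of_le ha hab
  set C : ℝ := 2 * (b / a) ^ 2 / s with hC
  have hCnn : 0 ≤ C := by positivity
  constructor
  · -- entrywise bounds
    have hE := entry_bound hM hN A a b s x y r c ha hab hA hr hc hs_c hx hy hrow hcol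
    have hEt := entry_bound hM hN At a b s xt yt r c ha hab hAt hr hc hs_c hxt hyt hrowt hcolt
    set D : Matrix (Fin M) (Fin N) ℝ :=
      (Matrix.of fun i j => xt i * At i j * yt j) -
        (Matrix.of fun i j => x i * A i j * y j) with hD
    have hDij : ∀ i j, D i j ^ 2 ≤ (C * r i * c j) ^ 2 := by
      intro i j
      have h1 : D i j = xt i * At i j * yt j - x i * A i j * y j := rfl
      have h2 : 0 ≤ x i * A i j * y j :=
        mul_nonneg (mul_nonneg (hx i).le (le_trans ha.le (hA i j).1)) (hy j).le
      have h3 : 0 ≤ xt i * At i j * yt j :=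
        mul_nonneg (mul_nonneg (hxt i).le (le_trans ha.le (hAt i j).1)) (hyt j).le
      have hB : C * r i * c j = 2 * ((b / a) ^ 2 * r i * c j / s) := by
        rw [hC]; ring
      have h4 := hE i j
      have h5 := hEt i j
      apply sq_le_sq'
      · rw [h1, hB]; linarith
      · rw [h1, hB]; linarith
    calc ‖D‖ ≤ Real.sqrt (∑ i, ∑ j, D i j ^ 2) := l2_opNorm_le_frob D
      _ ≤ Real.sqrt (∑ i, ∑ j, (C * r i * c j) ^ 2) := by
          apply Real.sqrt_le_sqrt
          exact Finset.sum_le_sum fun i _ => Finset.sum_le_sum fun j _ => hDij i j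
      _ = Real.sqrt (C ^ 2 * ((∑ i, r i ^ 2) * (∑ j, c j ^ 2))) := by
          congr 1
          rw [Finset.sum_mul_sum, Finset.mul_sum]
          refine Finset.sum_congr rfl fun i _ => ?_
          rw [Finset.mul_sum]
          exact Finset.sum_congr rfl fun j _ => by ring
      _ = C * (Real.sqrt (∑ i, r i ^ 2) * Real.sqrt (∑ j, c j ^ 2)) := by
          rw [Real.sqrt_mul (sq_nonneg C), Real.sqrt_sq hCnn,
            Real.sqrt_mul (by positivity)]
      _ = 2 * (b / a) ^ 2 * (Real.sqrt (∑ i, r i ^ 2) * Real.sqrt (∑ j, c j ^ 2)) / s := by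
          rw [hC]; ring
  · -- second inequality
    apply div_le_div_of_nonneg_right _ hs.le
    apply mul_le_mul_of_nonneg_left _ (by positivity)
    have hsupr : ∀ i, r i ≤ ⨆ i, r i := fun i => le_ciSup (Set.Finite.bddAbove (Set.finite_range r)) i
    have hsupc : ∀ j, c j ≤ ⨆ j, c j := fun j => le_ciSup (Set.Finite.bddAbove (Set.finite_range c)) j
    have hsuprn : 0 ≤ ⨆ i, r i := le_trans (hr ⟨0, hM⟩).le (hsupr ⟨0, hM⟩)
    have hsupcn : 0 ≤ ⨆ j, c j := le_trans (hc ⟨0, hN⟩).le (hsupc ⟨0, hN⟩)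
    have key : ∀ (n : ℕ) (f : Fin n → ℝ), (∀ i, 0 ≤ f i) → (∀ i, f i ≤ ⨆ i, f i) →
        0 ≤ (⨆ i, f i) → Real.sqrt (∑ i, f i ^ 2) ≤ Real.sqrt n * ⨆ i, f i := by
      intro n f hf hfs hfsn
      have h1 : ∑ i, f i ^ 2 ≤ (n : ℝ) * (⨆ i, f i) ^ 2 := by
        calc ∑ i, f i ^ 2 ≤ ∑ _i : Fin n, (⨆ i, f i) ^ 2 :=
              Finset.sum_le_sum fun i _ => pow_le_pow_left₀ (hf i) (hfs i) 2
          _ = (n : ℝ) * (⨆ i, f i) ^ 2 := by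
              rw [Finset.sum_const, Finset.card_univ, Fintype.card_fin, nsmul_eq_mul]
      calc Real.sqrt (∑ i, f i ^ 2) ≤ Real.sqrt ((n : ℝ) * (⨆ i, f i) ^ 2) :=
            Real.sqrt_le_sqrt h1
        _ = Real.sqrt n * ⨆ i, f i := by
            rw [Real.sqrt_mul (Nat.cast_nonneg n), Real.sqrt_sq hfsn]
    exact mul_le_mul (key M r (fun i => (hr i).le) hsupr hsuprn)
      (key N c (fun j => (hc j).le) hsupc hsupcn) (Real.sqrt_nonneg _)
      (mul_nonneg (Real.sqrt_nonneg _) hsuprn)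
end

section
/- If positive vectors x, y scale a matrix A with entries in [a,b] (0 < a ≤ b) to row sums r and column sums c with ‖r‖₁ = ‖c‖₁ = s, then the scaled matrix P = D(x) A D(y) satisfies P_{i,j} ≤ (b/a)² · r_i c_j / s for all i, j. -/
open Finset

theorem scaled_matrix_entry_bound
    (M N : ℕ) (A : Fin M → Fin N → ℝ) (a b s : ℝ)
    (x : Fin M → ℝ) (y : Fin N → ℝ) (r : Fin M → ℝ) (c : Fin N → ℝ)
    (ha : 0 < a) (hab : a ≤ b)
    (hA : ∀ i j, a ≤ A i j ∧ A i j ≤ b)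
    (hr : ∀ i, 0 < r i) (hc : ∀ j, 0 < c j)
    (hs_r : ∑ i, r i = s) (hs_c : ∑ j, c j = s)
    (hx : ∀ i, 0 < x i) (hy : ∀ j, 0 < y j)
    (hrow : ∀ i, ∑ j, x i * A i j * y j = r i)
    (hcol : ∀ j, ∑ i, x i * A i j * y j = c j) :
    ∀ i j, x i * A i j * y j ≤ (b / a) ^ 2 * (r i * c j) / s := by
  intro i j
  have hb : 0 < b := ha.trans_le hab
  set X := ∑ i, x i with hX
  set Y := ∑ j, y j with hY
  have hXpos : 0 < X := Finset.sum_pos (fun i _ => hx i) ⟨i, Finset.mem_univ i⟩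
  have hYpos : 0 < Y := Finset.sum_pos (fun j _ => hy j) ⟨j, Finset.mem_univ j⟩
  have hspos : 0 < s := by
    rw [← hs_r]; exact Finset.sum_pos (fun i _ => hr i) ⟨i, Finset.mem_univ i⟩
  -- r i ≥ a * x i * Y
  have hri : a * (x i * Y) ≤ r i := by
    rw [← hrow i, Finset.mul_sum, Finset.mul_sum]
    refine Finset.sum_le_sum fun k _ => ?_
    have := (hA i k).1
    have h1 : a * y k ≤ A i k * y k :=
      mul_le_mul_of_nonneg_right this (hy k).le
    calc a * (x i * y k) = x i * (a * y k) := by ring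
      _ ≤ x i * (A i k * y k) := mul_le_mul_of_nonneg_left h1 (hx i).le
      _ = x i * A i k * y k := by ring
  -- c j ≥ a * y j * X
  have hcj : a * (y j * X) ≤ c j := by
    rw [← hcol j, Finset.mul_sum, Finset.mul_sum]
    refine Finset.sum_le_sum fun k _ => ?_
    have := (hA k j).1
    calc a * (y j * x k) = x k * a * y j := by ring
      _ ≤ x k * A k j * y j := by
        apply mul_le_mul_of_nonneg_right _ (hy j).le
        exact mul_le_mul_of_nonneg_left this (hx k).le
  -- s ≤ b * X * Y
  have hsXY : s ≤ b * X * Y := by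
    rw [← hs_r]
    calc ∑ i, r i = ∑ i, ∑ j, x i * A i j * y j := by
          exact Finset.sum_congr rfl fun i _ => (hrow i).symm
      _ ≤ ∑ i, ∑ j, x i * b * y j := by
          refine Finset.sum_le_sum fun i _ => Finset.sum_le_sum fun k _ => ?_
          apply mul_le_mul_of_nonneg_right _ (hy k).le
          exact mul_le_mul_of_nonneg_left (hA i k).2 (hx i).le
      _ = ∑ i, x i * (b * Y) := by
          refine Finset.sum_congr rfl fun i _ => ?_
          simp_rw [hY, Finset.mul_sum, mul_assoc]
      _ = b * X * Y := by rw [hX, ← Finset.sum_mul]; ring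
  -- key: a^2 * s * (x i * y j) ≤ b * (r i * c j)
  have key : a ^ 2 * s * (x i * y j) ≤ b * (r i * c j) := by
    have h1 : a ^ 2 * (x i * y j) * s ≤ a ^ 2 * (x i * y j) * (b * X * Y) := by
      apply mul_le_mul_of_nonneg_left hsXY
      exact mul_nonneg (by positivity) (mul_nonneg (hx i).le (hy j).le)
    have h2 : a * (x i * Y) * (a * (y j * X)) ≤ r i * c j := by
      apply mul_le_mul hri hcj _ (hr i).le
      exact mul_nonneg ha.le (mul_nonneg (hy j).le hXpos.le)
    calc a ^ 2 * s * (x i * y j) = a ^ 2 * (x i * y j) * s := by ring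
      _ ≤ a ^ 2 * (x i * y j) * (b * X * Y) := h1
      _ = b * (a * (x i * Y) * (a * (y j * X))) := by ring
      _ ≤ b * (r i * c j) := mul_le_mul_of_nonneg_left h2 hb.le
  have hPb : x i * A i j * y j ≤ b * (x i * y j) := by
    calc x i * A i j * y j = x i * (A i j * y j) := by ring
      _ ≤ x i * (b * y j) :=
        mul_le_mul_of_nonneg_left (mul_le_mul_of_nonneg_right (hA i j).2 (hy j).le) (hx i).le
      _ = b * (x i * y j) := by ring
  have hgoal : b * (x i * y j) ≤ (b / a) ^ 2 * (r i * c j) / s := by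
    rw [div_pow, le_div_iff₀ hspos, div_mul_eq_mul_div, le_div_iff₀ (pow_pos ha 2)]
    calc b * (x i * y j) * s * a ^ 2 = b * (a ^ 2 * s * (x i * y j)) := by ring
      _ ≤ b * (b * (r i * c j)) := mul_le_mul_of_nonneg_left key hb.le
      _ = b ^ 2 * (r i * c j) := by ring
  exact hPb.trans hgoal
end

section
/- Suppose a positive matrix Ã with entries in [a,b], 0 < a ≤ b, admits scaling factors to row sums r and column sums c (positive, ‖r‖₁ = ‖c‖₁ = s). If in addition approximate scaling by a reference pair (x,y), satisfying C₁ ≥ √a/b and C₂ ≥ √a/b where C₁ = min_i x_i/(r_i/√s), C₂ = min_j y_j/(c_j/√s), holds with error ε ∈ (0, 1/2], then there is a scaling pair (x̃, ỹ) with |x̃_i − x_i|/x_i ≤ ε(2 + 4(s/(M min_i r_i))(b/a)^{7/2}) and |ỹ_j − y_j|/y_j ≤ ε(2 + 4(s/(N min_j c_j))(b/a)^{7/2}) for all i, j. -/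
open Finset

lemma numA (e z : ℝ) (he : 0 ≤ e) (hz : 0 ≤ z) (hy : 0 ≤ 1 - 3*e - z) :
    (1+e) ≤ (1-e)^2 * (1+2*e+(4*e+z))^2 * (1+e-(4*e+z)/2) := by
  have hA0 : (0:ℝ) ≤ z := hz
  have hA1 : (0:ℝ) ≤ z*(1-3*e-z) := by positivity
  have hA2 : (0:ℝ) ≤ z*(1-3*e-z)*(1-3*e-z)*(1-3*e-z)*(1-3*e-z) := by positivity
  have hA3 : (0:ℝ) ≤ z*z*(1-3*e-z) := by positivity
  have hA4 : (0:ℝ) ≤ z*z*(1-3*e-z)*(1-3*e-z) := by positivity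
  have hA5 : (0:ℝ) ≤ z*z*(1-3*e-z)*(1-3*e-z)*(1-3*e-z) := by positivity
  have hA6 : (0:ℝ) ≤ z*z*z := by positivity
  have hA7 : (0:ℝ) ≤ z*z*z*(1-3*e-z) := by positivity
  have hA8 : (0:ℝ) ≤ z*z*z*(1-3*e-z)*(1-3*e-z) := by positivity
  have hA9 : (0:ℝ) ≤ z*z*z*z := by positivity
  have hA10 : (0:ℝ) ≤ e := he
  have hA11 : (0:ℝ) ≤ e*(1-3*e-z) := by positivity
  have hA12 : (0:ℝ) ≤ e*z := by positivity
  have hA13 : (0:ℝ) ≤ e*z*(1-3*e-z) := by positivity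
  have hA14 : (0:ℝ) ≤ e*z*(1-3*e-z)*(1-3*e-z) := by positivity
  have hA15 : (0:ℝ) ≤ e*z*z*z*(1-3*e-z) := by positivity
  have hA16 : (0:ℝ) ≤ e*z*z*z*z := by positivity
  have hA17 : (0:ℝ) ≤ e*e*(1-3*e-z) := by positivity
  have hA18 : (0:ℝ) ≤ e*e*(1-3*e-z)*(1-3*e-z) := by positivity
  have hA19 : (0:ℝ) ≤ e*e*(1-3*e-z)*(1-3*e-z)*(1-3*e-z) := by positivity
  nlinarith [hA0, hA1, hA2, hA3, hA4, hA5, hA6, hA7, hA8, hA9, hA10, hA11, hA12, hA13, hA14, hA15, hA16, hA17, hA18, hA19]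

lemma numB (e t : ℝ) (he0 : 0 ≤ e) (he1 : e ≤ 1/2) (ht : 1 ≤ t) :
    (1+e)*t ≤ (1-e)^3 * (1+2*e+(1+e)*t)^2 := by
  have hd0 : (0:ℝ) ≤ 1-2*e := by linarith
  have hd1 : (1:ℝ)-2*e ≤ 1 := by linarith
  have ht0 : (0:ℝ) ≤ t-1 := by linarith
  have hc3 : (0:ℝ) ≤ ((1-2*e)-(1-2*e)^3) := by nlinarith [mul_nonneg (mul_nonneg hd0 he0) (by linarith : (0:ℝ) ≤ 2-2*e)]
  have hc4 : (0:ℝ) ≤ ((1-2*e)-(1-2*e)^4) := by nlinarith [mul_nonneg (mul_nonneg (mul_nonneg hd0 hd0) hd0) he0, mul_nonneg hd0 he0]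
  have hB0 : (0:ℝ) ≤ (1-3*(t-1))^2 := sq_nonneg _
  have hB4 : (0:ℝ) ≤ ((1-2*e)-(1-2*e)^3)*(t-1) := mul_nonneg hc3 ht0
  have hB5 : (0:ℝ) ≤ ((1-2*e)-(1-2*e)^4)*(t-1) := mul_nonneg hc4 ht0
  have hB6 : (0:ℝ) ≤ (1-2*e)*(t-1) := mul_nonneg hd0 ht0
  have hB7 : (0:ℝ) ≤ ((1-2*e)-(1-2*e)^3)*(t-1)^2 := mul_nonneg hc3 (sq_nonneg _)
  have hB8 : (0:ℝ) ≤ ((1-2*e)-(1-2*e)^4)*(t-1)^2 := mul_nonneg hc4 (sq_nonneg _)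
  have hB9 : (0:ℝ) ≤ (1-2*e)*(t-1)^2 := mul_nonneg hd0 (sq_nonneg _)
  have hB10 : (0:ℝ) ≤ (1-2*e)^2 := sq_nonneg _
  have hB11 : (0:ℝ) ≤ (1-2*e)^2*(t-1) := mul_nonneg hB10 ht0
  have hB12 : (0:ℝ) ≤ (1-2*e)^2*(t-1)^2 := mul_nonneg hB10 (sq_nonneg _)
  have hB13 : (0:ℝ) ≤ (1-2*e)^5 := by positivity
  have hB14 : (0:ℝ) ≤ (1-2*e)^5*(t-1) := mul_nonneg hB13 ht0
  have hB15 : (0:ℝ) ≤ (1-2*e)^5*(t-1)^2 := mul_nonneg hB13 (sq_nonneg _)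
  nlinarith [hB0, hc3, hc4, hd0, hB4, hB5, hB6, hB7, hB8, hB9, hB10, hB11, hB12, hB13, hB14, hB15]


lemma exists_scaling
    (M N : ℕ) (hM : 0 < M) (hN : 0 < N)
    (At : Fin M → Fin N → ℝ) (a : ℝ)
    (r : Fin M → ℝ) (c : Fin N → ℝ)
    (ha : 0 < a)
    (hA : ∀ i j, a ≤ At i j)
    (hr : ∀ i, 0 < r i) (hc : ∀ j, 0 < c j)
    (hrc : ∑ i, r i = ∑ j, c j) :
    ∃ u : Fin M → ℝ, (∀ i, 0 < u i) ∧
      ∀ i, ∑ j, c j * (At i j / (∑ k, u k * At k j)) = r i / u i := by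
  haveI : Nonempty (Fin M) := ⟨⟨0, hM⟩⟩
  haveI : Nonempty (Fin N) := ⟨⟨0, hN⟩⟩
  set col : (Fin M → ℝ) → Fin N → ℝ := fun u j => ∑ k, u k * At k j with hcol
  set g : (Fin M → ℝ) → ℝ :=
    fun u => (∑ j, c j * Real.log (col u j)) - ∑ i, r i * Real.log (u i) with hg
  set sc : ℝ := ∑ j, c j with hsc
  have hsc0 : 0 < sc := Finset.sum_pos (fun j _ => hc j) univ_nonempty
  set u0 : Fin M → ℝ := fun _ => (M : ℝ)⁻¹ with hu0
  have hMR : (0:ℝ) < M := by exact_mod_cast hM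
  set L : ℝ := g u0 with hL
  obtain ⟨i₀r, -, hi₀r⟩ := Finset.exists_min_image univ r ⟨Classical.arbitrary _, mem_univ _⟩
  set rm : ℝ := r i₀r with hrm
  have hrm0 : 0 < rm := hr i₀r
  set X : ℝ := max ((L - sc * Real.log a + 1) / rm) 0 with hX
  have hX0 : 0 ≤ X := le_max_right _ _
  set lo : ℝ := min ((2 * M : ℝ)⁻¹) (Real.exp (-X)) with hlo
  have hlo0 : 0 < lo := lt_min (by positivity) (Real.exp_pos _)
  have hloM : lo ≤ (2 * M : ℝ)⁻¹ := min_le_left _ _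
  have hloe : lo ≤ Real.exp (-X) := min_le_right _ _
  set K : Set (Fin M → ℝ) := {u | (∀ i, lo ≤ u i) ∧ ∑ i, u i = 1} with hK
  -- u0 ∈ K
  have hKu0 : u0 ∈ K := by
    constructor
    · intro i
      exact hloM.trans (by rw [mul_comm]; exact inv_anti₀ hMR (by linarith))
    · simp [u0, Finset.sum_const, card_univ]
      field_simp
  -- positivity on K
  have hupos : ∀ u ∈ K, ∀ i, 0 < u i := fun u hu i => lt_of_lt_of_le hlo0 (hu.1 i)
  have hKbd : ∀ u ∈ K, ∀ i, u i ≤ 1 := by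
    intro u hu i
    calc u i ≤ ∑ k, u k := Finset.single_le_sum (fun k _ => (hupos u hu k).le) (mem_univ i)
    _ = 1 := hu.2
  have hcola : ∀ u ∈ K, ∀ j, a ≤ col u j := by
    intro u hu j
    have : ∑ k, u k * a ≤ col u j :=
      Finset.sum_le_sum fun k _ => mul_le_mul_of_nonneg_left (hA k j) (hupos u hu k).le
    rwa [← Finset.sum_mul, hu.2, one_mul] at this
  have hcolpos : ∀ u ∈ K, ∀ j, 0 < col u j := fun u hu j => lt_of_lt_of_le ha (hcola u hu j)
  -- compactness
  have hKsub : K ⊆ Set.Icc (fun _ => lo) (fun _ => (1:ℝ)) := by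
    intro u hu
    exact ⟨fun i => hu.1 i, fun i => hKbd u hu i⟩
  have hKcl : IsClosed K := by
    have : K = (⋂ i, {u : Fin M → ℝ | lo ≤ u i}) ∩ {u : Fin M → ℝ | ∑ i, u i = 1} := by
      ext u; simp [K, Set.mem_iInter]
    rw [this]
    exact IsClosed.inter
      (isClosed_iInter fun i => isClosed_le continuous_const (continuous_apply i))
      (isClosed_eq (continuous_finset_sum _ fun i _ => continuous_apply i) continuous_const)
  have hKcpt : IsCompact K := IsCompact.of_isClosed_subset isCompact_Icc hKcl hKsub
  -- continuity of g
  have hgc : ContinuousOn g K := by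
    apply ContinuousOn.sub
    · apply continuousOn_finset_sum
      intro j _
      exact continuousOn_const.mul
        (((continuous_finset_sum _ fun k _ => (continuous_apply k).mul continuous_const).continuousOn).log
          (fun u hu => (hcolpos u hu j).ne'))
    · apply continuousOn_finset_sum
      intro i _
      exact continuousOn_const.mul
        (((continuous_apply i).continuousOn).log (fun u hu => (hupos u hu i).ne'))
  obtain ⟨u, huK, hmin⟩ := hKcpt.exists_isMinOn ⟨u0, hKu0⟩ hgc
  have hgL : g u ≤ L := isMinOn_iff.mp hmin u0 hKu0
  -- strict interiority
  have hstrict : ∀ i, lo < u i := by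
    intro i
    rcases lt_or_ge lo (u i) with h | h
    · exact h
    · exfalso
      have hui : u i ≤ lo := h
      have huipos := hupos u huK i
      -- lower bound on the log part
      have t1 : sc * Real.log a ≤ ∑ j, c j * Real.log (col u j) := by
        rw [hsc, Finset.sum_mul]
        exact Finset.sum_le_sum fun j _ => mul_le_mul_of_nonneg_left
            (Real.log_le_log ha (hcola u huK j)) (hc j).le
      have t2 : ∑ k, r k * Real.log (u k) ≤ r i * Real.log (u i) := by
        rw [← Finset.add_sum_erase univ (fun k => r k * Real.log (u k)) (mem_univ i)]
        have : ∑ k ∈ univ.erase i, r k * Real.log (u k) ≤ 0 :=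
          Finset.sum_nonpos fun k _ =>
            mul_nonpos_of_nonneg_of_nonpos (hr k).le
              (Real.log_nonpos (hupos u huK k).le (hKbd u huK k))
        linarith
      have t3 : Real.log (u i) ≤ Real.log lo := Real.log_le_log huipos hui
      have t4 : Real.log lo ≤ -X := by
        have := Real.log_le_log hlo0 hloe
        rwa [Real.log_exp] at this
      have t5 : L - sc * Real.log a + 1 ≤ rm * X := by
        have hX1 : (L - sc * Real.log a + 1) / rm ≤ X := le_max_left _ _
        calc L - sc * Real.log a + 1 = rm * ((L - sc * Real.log a + 1) / rm) := by
              field_simp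
        _ ≤ rm * X := mul_le_mul_of_nonneg_left hX1 hrm0.le
      have t6 : rm * X ≤ r i * X := mul_le_mul_of_nonneg_right (hi₀r i (mem_univ i)) hX0
      have t7 : r i * X ≤ r i * (-Real.log (u i)) := by
        apply mul_le_mul_of_nonneg_left _ (hr i).le
        linarith
      have hgu : (∑ j, c j * Real.log (col u j)) - (∑ k, r k * Real.log (u k)) ≤ L := hgL
      linarith
  -- the first-order condition
  set F : Fin M → ℝ := fun i => (∑ j, c j * (At i j / col u j)) - r i / u i with hF
  set i₀ : Fin M := Classical.arbitrary _ with hi₀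
  have hFeq : ∀ i, F i = F i₀ := by
    intro i
    rcases eq_or_ne i i₀ with hii | hii
    · rw [hii]
    -- direction
    set e : Fin M → ℝ := fun k => (if k = i then (1:ℝ) else 0) - (if k = i₀ then 1 else 0)
      with he
    have he_sum : ∑ k, e k = 0 := by
      simp [he, Finset.sum_sub_distrib]
    set B : Fin N → ℝ := fun j => ∑ k, e k * At k j with hB
    have hBval : ∀ j, B j = At i j - At i₀ j := by
      intro j
      simp [hB, he, sub_mul, Finset.sum_sub_distrib, ite_mul]
    have colv : ∀ (t : ℝ) j, col (fun k => u k + t * e k) j = col u j + t * B j := by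
      intro t j
      show ∑ k, (u k + t * e k) * At k j = _
      rw [show col u j + t * B j = ∑ k, (u k * At k j + t * (e k * At k j)) by
        rw [Finset.sum_add_distrib, ← Finset.mul_sum]]
      exact Finset.sum_congr rfl fun k _ => by ring
    set δ : ℝ := min (u i - lo) (u i₀ - lo) with hδdef
    have hδ : 0 < δ := lt_min (by linarith [hstrict i]) (by linarith [hstrict i₀])
    have hmem : ∀ t : ℝ, |t| < δ → (fun k => u k + t * e k) ∈ K := by
      intro t ht
      have ht1 : |t| < u i - lo := lt_of_lt_of_le ht (min_le_left _ _)
      have ht2 : |t| < u i₀ - lo := lt_of_lt_of_le ht (min_le_right _ _)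
      have habs1 : -t ≤ |t| := neg_le_abs t
      have habs2 : t ≤ |t| := le_abs_self t
      constructor
      · intro k
        show lo ≤ u k + t * e k
        rcases eq_or_ne k i with hk | hk
        · have h1 : e k = 1 := by simp [he, hk, hii]
          rw [h1, hk]
          linarith
        rcases eq_or_ne k i₀ with hk0 | hk0
        · have h1 : e k = -1 := by simp [he, hk0, hk, Ne.symm hii]
          rw [h1, hk0]
          linarith
        · have h1 : e k = 0 := by simp [he, hk, hk0]
          rw [h1]
          have := huK.1 k
          linarith
      · show ∑ k, (u k + t * e k) = 1
        rw [Finset.sum_add_distrib, ← Finset.mul_sum, he_sum, huK.2]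
        ring
    set φ : ℝ → ℝ := fun t =>
      (∑ j, c j * Real.log (col u j + t * B j)) - ∑ k, r k * Real.log (u k + t * e k)
      with hφ
    have hφval : ∀ t : ℝ, |t| < δ → φ 0 ≤ φ t := by
      intro t ht
      have h1 : φ t = g (fun k => u k + t * e k) := by
        show _ = (∑ j, c j * Real.log (col (fun k => u k + t * e k) j))
          - ∑ k, r k * Real.log (u k + t * e k)
        simp only [colv]; rfl
      have h0 : φ 0 = g u := by
        show _ = (∑ j, c j * Real.log (col u j)) - ∑ k, r k * Real.log (u k)
        simp only [hφ]
        norm_num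
      rw [h0, h1]
      exact isMinOn_iff.mp hmin _ (hmem t ht)
    have hloc : IsLocalMin φ 0 := by
      show ∀ᶠ t in nhds 0, φ 0 ≤ φ t
      filter_upwards [Metric.ball_mem_nhds (0:ℝ) hδ] with t ht
      rw [Metric.mem_ball, Real.dist_eq, sub_zero] at ht
      exact hφval t ht
    have hder : HasDerivAt φ
        ((∑ j, c j * (B j / col u j)) - ∑ k, r k * (e k / u k)) 0 := by
      apply HasDerivAt.sub
      · apply HasDerivAt.fun_sum
        intro j _
        have hbase : HasDerivAt (fun t : ℝ => col u j + t * B j) (B j) 0 := by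
          simpa using ((hasDerivAt_id (0:ℝ)).mul_const (B j)).const_add (col u j)
        have hne : col u j + 0 * B j ≠ 0 := by
          have := hcolpos u huK j
          simp only [zero_mul, add_zero]
          exact this.ne'
        have := (hbase.log hne).const_mul (c j)
        simpa using this
      · apply HasDerivAt.fun_sum
        intro k _
        have hbase : HasDerivAt (fun t : ℝ => u k + t * e k) (e k) 0 := by
          simpa using ((hasDerivAt_id (0:ℝ)).mul_const (e k)).const_add (u k)
        have hne : u k + 0 * e k ≠ 0 := by
          have := hupos u huK k
          simp only [zero_mul, add_zero]
          exact this.ne'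
        have := (hbase.log hne).const_mul (r k)
        simpa using this
    have hV0 : (∑ j, c j * (B j / col u j)) - ∑ k, r k * (e k / u k) = 0 := by
      rw [← hder.deriv]
      exact hloc.deriv_eq_zero
    -- unfold to F i - F i₀
    have hsum1 : ∑ j, c j * (B j / col u j)
        = (∑ j, c j * (At i j / col u j)) - ∑ j, c j * (At i₀ j / col u j) := by
      rw [← Finset.sum_sub_distrib]
      exact Finset.sum_congr rfl fun j _ => by rw [hBval j]; ring
    have hsum2 : ∑ k, r k * (e k / u k) = r i / u i - r i₀ / u i₀ := by
      have hterm : ∀ k, r k * (e k / u k) =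
          (if k = i then r i / u i else 0) - (if k = i₀ then r i₀ / u i₀ else 0) := by
        intro k
        rcases eq_or_ne k i with hk | hk
        · have hki₀ : ¬k = i₀ := by rw [hk]; exact hii
          have h1 : e k = 1 := by simp only [he]; rw [if_pos hk, if_neg hki₀]; norm_num
          rw [if_pos hk, if_neg hki₀, h1, hk, mul_one_div, sub_zero]
        · rcases eq_or_ne k i₀ with hk0 | hk0
          · have h1 : e k = -1 := by simp only [he]; rw [if_neg hk, if_pos hk0]; norm_num
            rw [if_neg hk, if_pos hk0, h1, hk0]
            ring
          · have h1 : e k = 0 := by simp only [he]; rw [if_neg hk, if_neg hk0]; norm_num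
            rw [if_neg hk, if_neg hk0, h1]
            simp
      rw [Finset.sum_congr rfl (fun k _ => hterm k), Finset.sum_sub_distrib]
      simp
    rw [hsum1, hsum2] at hV0
    rw [hF]
    simp only []
    linarith
  -- Euler identity
  have hcolne : ∀ j, col u j ≠ 0 := fun j => (hcolpos u huK j).ne'
  have h1 : ∑ i, u i * (∑ j, c j * (At i j / col u j)) = sc := by
    rw [hsc]
    have swap : ∑ i, u i * (∑ j, c j * (At i j / col u j))
        = ∑ j, ∑ i, u i * (c j * (At i j / col u j)) := by
      rw [Finset.sum_comm]
      exact Finset.sum_congr rfl fun i _ => Finset.mul_sum _ _ _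
    rw [swap]
    refine Finset.sum_congr rfl fun j _ => ?_
    have : ∑ i, u i * (c j * (At i j / col u j))
        = (c j / col u j) * ∑ i, u i * At i j := by
      rw [Finset.mul_sum]
      exact Finset.sum_congr rfl fun i _ => by ring
    rw [this]
    rw [show (∑ i, u i * At i j) = col u j from rfl]
    rw [div_mul_cancel₀ _ (hcolne j)]
  have h2 : ∑ i, u i * (r i / u i) = sc := by
    rw [← hrc]
    exact Finset.sum_congr rfl fun i _ => by
      rw [mul_comm, div_mul_cancel₀ _ (hupos u huK i).ne']
  have heuler : ∑ i, u i * F i = 0 := by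
    calc ∑ i, u i * F i
        = ∑ i, (u i * (∑ j, c j * (At i j / col u j)) - u i * (r i / u i)) :=
          Finset.sum_congr rfl fun i _ => by rw [hF]; ring
      _ = sc - sc := by rw [Finset.sum_sub_distrib, h1, h2]
      _ = 0 := by ring
  have hFi₀ : F i₀ = 0 := by
    have h3 : ∑ i, u i * F i = (∑ i, u i) * F i₀ := by
      rw [Finset.sum_mul]
      exact Finset.sum_congr rfl fun i _ => by rw [hFeq i]
    rw [huK.2, one_mul] at h3
    exact h3.symm.trans heuler
  have hFall : ∀ i, F i = 0 := fun i => by rw [hFeq i]; exact hFi₀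
  refine ⟨u, fun i => hupos u huK i, fun i => ?_⟩
  have := hFall i
  rw [hF] at this
  simp only [] at this
  linarith

lemma sum_dev_const {n : ℕ} (v w : Fin n → ℝ) (m K : ℝ) :
    ∑ j, (v j - m) * (w j * K) = K * ((∑ j, v j * w j) - m * (∑ j, w j)) := by
  calc ∑ j, (v j - m) * (w j * K)
      = ∑ j, (K * (v j * w j) - K * (m * w j)) :=
        Finset.sum_congr rfl fun j _ => by ring
    _ = (∑ j, K * (v j * w j)) - ∑ j, K * (m * w j) := Finset.sum_sub_distrib _ _
    _ = K * (∑ j, v j * w j) - K * (m * ∑ j, w j) := by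
        rw [← Finset.mul_sum, ← Finset.mul_sum, ← Finset.mul_sum]
    _ = K * ((∑ j, v j * w j) - m * (∑ j, w j)) := by ring

lemma sum_dev_fn {n : ℕ} (v w A : Fin n → ℝ) (m K : ℝ) :
    ∑ j, (v j - m) * (w j * (A j * K)) =
      K * ((∑ j, A j * (v j * w j)) - m * (∑ j, A j * w j)) := by
  calc ∑ j, (v j - m) * (w j * (A j * K))
      = ∑ j, (K * (A j * (v j * w j)) - K * (m * (A j * w j))) :=
        Finset.sum_congr rfl fun j _ => by ring
    _ = (∑ j, K * (A j * (v j * w j))) - ∑ j, K * (m * (A j * w j)) := Finset.sum_sub_distrib _ _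
    _ = K * (∑ j, A j * (v j * w j)) - K * (m * ∑ j, A j * w j) := by
        rw [← Finset.mul_sum, ← Finset.mul_sum, ← Finset.mul_sum]
    _ = K * ((∑ j, A j * (v j * w j)) - m * (∑ j, A j * w j)) := by ring

set_option maxHeartbeats 2000000 in
theorem stability_of_scaling_factors_specialized
    (M N : ℕ) (hM : 0 < M) (hN : 0 < N)
    (At : Fin M → Fin N → ℝ) (a b s ε : ℝ)
    (x : Fin M → ℝ) (y : Fin N → ℝ) (r : Fin M → ℝ) (c : Fin N → ℝ)
    (ha : 0 < a) (hab : a ≤ b)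
    (hA : ∀ i j, a ≤ At i j ∧ At i j ≤ b)
    (hr : ∀ i, 0 < r i) (hc : ∀ j, 0 < c j)
    (hs_r : ∑ i, r i = s) (hs_c : ∑ j, c j = s)
    (hx : ∀ i, 0 < x i) (hy : ∀ j, 0 < y j)
    (hC1 : Real.sqrt a / b ≤ ⨅ i, x i / (r i / Real.sqrt s))
    (hC2 : Real.sqrt a / b ≤ ⨅ j, y j / (c j / Real.sqrt s))
    (hε : ε ∈ Set.Ioc (0 : ℝ) (1 / 2))
    (hcolε : ∀ j, |(1 / c j) * ∑ i, x i * At i j * y j - 1| ≤ ε)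
    (hrowε : ∀ i, |(1 / r i) * ∑ j, x i * At i j * y j - 1| ≤ ε) :
    ∃ (xt : Fin M → ℝ) (yt : Fin N → ℝ),
      (∀ i, 0 < xt i) ∧ (∀ j, 0 < yt j) ∧
      (∀ i, ∑ j, xt i * At i j * yt j = r i) ∧
      (∀ j, ∑ i, xt i * At i j * yt j = c j) ∧
      (∀ i, |xt i - x i| / x i ≤
        ε * (2 + 4 * (s / (M * ⨅ i', r i')) * (b / a) ^ ((7 : ℝ) / 2))) ∧
      (∀ j, |yt j - y j| / y j ≤
        ε * (2 + 4 * (s / (N * ⨅ j', c j')) * (b / a) ^ ((7 : ℝ) / 2))) := by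
  obtain ⟨hε0, hε12⟩ := hε
  haveI : Nonempty (Fin M) := ⟨⟨0, hM⟩⟩
  haveI : Nonempty (Fin N) := ⟨⟨0, hN⟩⟩
  have hb : 0 < b := lt_of_lt_of_le ha hab
  have hba : 0 ≤ b - a := sub_nonneg.2 hab
  have hs0 : 0 < s := hs_r ▸ Finset.sum_pos (fun i _ => hr i) univ_nonempty
  have h1ε : 0 < 1 - ε := by linarith
  have h1ε' : 0 < 1 + ε := by linarith
  -- exact scaling pair
  obtain ⟨u, hu0, hu⟩ := exists_scaling M N hM hN At a r c ha (fun i j => (hA i j).1)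
    hr hc (by rw [hs_r, hs_c])
  set col : Fin N → ℝ := fun j => ∑ k, u k * At k j with hcoldef
  have hcolpos : ∀ j, 0 < col j :=
    fun j => Finset.sum_pos (fun k _ => mul_pos (hu0 k) (lt_of_lt_of_le ha (hA k j).1))
      univ_nonempty
  set yt0 : Fin N → ℝ := fun j => c j / col j with hyt0def
  have hyt0 : ∀ j, 0 < yt0 j := fun j => div_pos (hc j) (hcolpos j)
  set ryt : Fin M → ℝ := fun i => ∑ j, At i j * yt0 j with hrytdef
  have hrytpos : ∀ i, 0 < ryt i :=
    fun i => Finset.sum_pos (fun j _ => mul_pos (lt_of_lt_of_le ha (hA i j).1) (hyt0 j))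
      univ_nonempty
  have hryt : ∀ i, ryt i = r i / u i := by
    intro i
    rw [hrytdef]
    simp only []
    rw [← hu i]
    exact Finset.sum_congr rfl fun j _ => by rw [hyt0def]; ring
  have hrowExact : ∀ i, u i * ryt i = r i := by
    intro i
    rw [hryt i, mul_comm, div_mul_cancel₀ _ (hu0 i).ne']
  have hcolExact : ∀ j, yt0 j * col j = c j := by
    intro j
    rw [hyt0def]
    simp only []
    rw [div_mul_cancel₀ _ (hcolpos j).ne']
  -- basic sums
  set Sx : ℝ := ∑ i, x i with hSx
  set Sy : ℝ := ∑ j, y j with hSy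
  set Sxt : ℝ := ∑ i, u i with hSxt
  set Syt : ℝ := ∑ j, yt0 j with hSyt
  have hSxp : 0 < Sx := Finset.sum_pos (fun i _ => hx i) univ_nonempty
  have hSyp : 0 < Sy := Finset.sum_pos (fun j _ => hy j) univ_nonempty
  have hSxtp : 0 < Sxt := Finset.sum_pos (fun i _ => hu0 i) univ_nonempty
  have hSytp : 0 < Syt := Finset.sum_pos (fun j _ => hyt0 j) univ_nonempty
  set p : Fin M → ℝ := fun i => u i / x i with hpdef
  set q : Fin N → ℝ := fun j => yt0 j / y j with hqdef
  have hppos : ∀ i, 0 < p i := fun i => div_pos (hu0 i) (hx i)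
  have hqpos : ∀ j, 0 < q j := fun j => div_pos (hyt0 j) (hy j)
  have hpx : ∀ i, u i = p i * x i := fun i => by
    rw [hpdef]; simp only []; rw [div_mul_cancel₀ _ (hx i).ne']
  have hqy : ∀ j, yt0 j = q j * y j := fun j => by
    rw [hqdef]; simp only []; rw [div_mul_cancel₀ _ (hy j).ne']
  set ry : Fin M → ℝ := fun i => ∑ j, At i j * y j with hrydef
  set cx : Fin N → ℝ := fun j => ∑ i, x i * At i j with hcxdef
  have hrypos : ∀ i, 0 < ry i :=
    fun i => Finset.sum_pos (fun j _ => mul_pos (lt_of_lt_of_le ha (hA i j).1) (hy j))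
      univ_nonempty
  have hcxpos : ∀ j, 0 < cx j :=
    fun j => Finset.sum_pos (fun i _ => mul_pos (hx i) (lt_of_lt_of_le ha (hA i j).1))
      univ_nonempty
  have hryub : ∀ i, ry i ≤ b * Sy := by
    intro i
    rw [hSy, Finset.mul_sum]
    exact Finset.sum_le_sum fun j _ => mul_le_mul_of_nonneg_right (hA i j).2 (hy j).le
  have hrylb : ∀ i, a * Sy ≤ ry i := by
    intro i
    rw [hSy, Finset.mul_sum]
    exact Finset.sum_le_sum fun j _ => mul_le_mul_of_nonneg_right (hA i j).1 (hy j).le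
  have hcxub : ∀ j, cx j ≤ b * Sx := by
    intro j
    rw [hSx, Finset.mul_sum]
    exact Finset.sum_le_sum fun i _ => by
      rw [mul_comm b (x i)]
      exact mul_le_mul_of_nonneg_left (hA i j).2 (hx i).le
  have hcxlb : ∀ j, a * Sx ≤ cx j := by
    intro j
    rw [hSx, Finset.mul_sum]
    exact Finset.sum_le_sum fun i _ => by
      rw [mul_comm a (x i)]
      exact mul_le_mul_of_nonneg_left (hA i j).1 (hx i).le
  have hrytub : ∀ i, ryt i ≤ b * Syt := by
    intro i
    rw [hSyt, Finset.mul_sum]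
    exact Finset.sum_le_sum fun j _ => mul_le_mul_of_nonneg_right (hA i j).2 (hyt0 j).le
  have hrytlb : ∀ i, a * Syt ≤ ryt i := by
    intro i
    rw [hSyt, Finset.mul_sum]
    exact Finset.sum_le_sum fun j _ => mul_le_mul_of_nonneg_right (hA i j).1 (hyt0 j).le
  have hcolub : ∀ j, col j ≤ b * Sxt := by
    intro j
    rw [hSxt, Finset.mul_sum]
    exact Finset.sum_le_sum fun i _ => by
      rw [mul_comm b (u i)]
      exact mul_le_mul_of_nonneg_left (hA i j).2 (hu0 i).le
  have hcollb : ∀ j, a * Sxt ≤ col j := by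
    intro j
    rw [hSxt, Finset.mul_sum]
    exact Finset.sum_le_sum fun i _ => by
      rw [mul_comm a (u i)]
      exact mul_le_mul_of_nonneg_left (hA i j).1 (hu0 i).le
  -- approximate marginals
  have hrowa : ∀ i, (1-ε) * r i ≤ x i * ry i ∧ x i * ry i ≤ (1+ε) * r i := by
    intro i
    have hsum : ∑ j, x i * At i j * y j = x i * ry i := by
      rw [hrydef, Finset.mul_sum]
      exact Finset.sum_congr rfl fun j _ => by ring
    have h := abs_le.1 (hrowε i)
    rw [hsum] at h
    constructor
    · have h2 : 1 - ε ≤ 1 / r i * (x i * ry i) := by linarith [h.1]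
      have h3 := mul_le_mul_of_nonneg_right h2 (hr i).le
      rwa [one_div, inv_mul_eq_div, div_mul_cancel₀ _ (hr i).ne'] at h3
    · have h2 : 1 / r i * (x i * ry i) ≤ 1 + ε := by linarith [h.2]
      have h3 := mul_le_mul_of_nonneg_right h2 (hr i).le
      rwa [one_div, inv_mul_eq_div, div_mul_cancel₀ _ (hr i).ne'] at h3
  have hcola2 : ∀ j, (1-ε) * c j ≤ cx j * y j ∧ cx j * y j ≤ (1+ε) * c j := by
    intro j
    have hsum : ∑ i, x i * At i j * y j = cx j * y j := by
      rw [hcxdef, Finset.sum_mul]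
    have h := abs_le.1 (hcolε j)
    rw [hsum] at h
    constructor
    · have h2 : 1 - ε ≤ 1 / c j * (cx j * y j) := by linarith [h.1]
      have h3 := mul_le_mul_of_nonneg_right h2 (hc j).le
      rwa [one_div, inv_mul_eq_div, div_mul_cancel₀ _ (hc j).ne'] at h3
    · have h2 : 1 / c j * (cx j * y j) ≤ 1 + ε := by linarith [h.2]
      have h3 := mul_le_mul_of_nonneg_right h2 (hc j).le
      rwa [one_div, inv_mul_eq_div, div_mul_cancel₀ _ (hc j).ne'] at h3
  -- extrema of p and q
  obtain ⟨im, -, him⟩ := Finset.exists_min_image univ p ⟨Classical.arbitrary _, mem_univ _⟩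
  obtain ⟨iM, -, hiM⟩ := Finset.exists_max_image univ p ⟨Classical.arbitrary _, mem_univ _⟩
  obtain ⟨jm, -, hjm⟩ := Finset.exists_min_image univ q ⟨Classical.arbitrary _, mem_univ _⟩
  obtain ⟨jM, -, hjM⟩ := Finset.exists_max_image univ q ⟨Classical.arbitrary _, mem_univ _⟩
  set pm : ℝ := p im with hpm
  set pM : ℝ := p iM with hpM
  set qm : ℝ := q jm with hqm
  set qM : ℝ := q jM with hqM
  have hpmpos : 0 < pm := hppos im
  have hpMpos : 0 < pM := hppos iM
  have hqmpos : 0 < qm := hqpos jm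
  have hqMpos : 0 < qM := hqpos jM
  have hpmM : pm ≤ pM := him iM (mem_univ _)
  have hqmM : qm ≤ qM := hjm jM (mem_univ _)
  have hSxtl : pm * Sx ≤ Sxt := by
    rw [hSxt, hSx, Finset.mul_sum]
    exact Finset.sum_le_sum fun i _ => by
      rw [hpx i]
      exact mul_le_mul_of_nonneg_right (him i (mem_univ _)) (hx i).le
  have hSxtu : Sxt ≤ pM * Sx := by
    rw [hSxt, hSx, Finset.mul_sum]
    exact Finset.sum_le_sum fun i _ => by
      rw [hpx i]
      exact mul_le_mul_of_nonneg_right (hiM i (mem_univ _)) (hx i).le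
  have hSytl : qm * Sy ≤ Syt := by
    rw [hSyt, hSy, Finset.mul_sum]
    exact Finset.sum_le_sum fun j _ => by
      rw [hqy j]
      exact mul_le_mul_of_nonneg_right (hjm j (mem_univ _)) (hy j).le
  have hSytu : Syt ≤ qM * Sy := by
    rw [hSyt, hSy, Finset.mul_sum]
    exact Finset.sum_le_sum fun j _ => by
      rw [hqy j]
      exact mul_le_mul_of_nonneg_right (hjM j (mem_univ _)) (hy j).le
  -- weighted decomposition bounds
  set Y1 : ℝ := a * Syt + (b-a) * (qm * Sy) with hY1
  set Y2 : ℝ := a * Syt + (b-a) * (qM * Sy) with hY2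
  set X1 : ℝ := a * Sxt + (b-a) * (pm * Sx) with hX1
  set X2 : ℝ := a * Sxt + (b-a) * (pM * Sx) with hX2
  have hY1pos : 0 < Y1 := by
    rw [hY1]
    linarith only [mul_nonneg hba (mul_pos hqmpos hSyp).le, mul_pos ha hSytp]
  have hX1pos : 0 < X1 := by
    rw [hX1]
    linarith only [mul_nonneg hba (mul_pos hpmpos hSxp).le, mul_pos ha hSxtp]
  -- auxiliary sum identities
  have hqySyt : ∑ j, q j * y j = Syt := by
    rw [hSyt]
    exact Finset.sum_congr rfl fun j _ => (hqy j).symm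
  have hpxSxt : ∑ i, p i * x i = Sxt := by
    rw [hSxt]
    exact Finset.sum_congr rfl fun i _ => (hpx i).symm
  have hrytq : ∀ i, ∑ j, At i j * (q j * y j) = ryt i := by
    intro i
    rw [hrytdef]
    exact Finset.sum_congr rfl fun j _ => by rw [← hqy j]
  have hcolp : ∀ j, ∑ i, At i j * (p i * x i) = col j := by
    intro j
    rw [hcoldef]
    exact Finset.sum_congr rfl fun i _ => by rw [← hpx i]; exact mul_comm _ _
  have hcxAt : ∀ j, ∑ i, At i j * x i = cx j := by
    intro j
    rw [hcxdef]
    exact Finset.sum_congr rfl fun i _ => mul_comm _ _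
  -- key inequalities, row version
  have hkeyY1 : ∀ i, ry i * Y1 ≤ (b * Sy) * ryt i := by
    intro i
    have hterm : ∀ j, (q j - qm) * (y j * (a * ry i)) ≤ (q j - qm) * (y j * (At i j * (b * Sy))) := by
      intro j
      apply mul_le_mul_of_nonneg_left _ (sub_nonneg.2 (hjm j (mem_univ _)))
      apply mul_le_mul_of_nonneg_left _ (hy j).le
      calc a * ry i ≤ a * (b * Sy) := mul_le_mul_of_nonneg_left (hryub i) ha.le
        _ ≤ At i j * (b * Sy) := mul_le_mul_of_nonneg_right (hA i j).1 (mul_pos hb hSyp).le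
    have hs := Finset.sum_le_sum fun j (_ : j ∈ univ) => hterm j
    rw [sum_dev_const q y qm (a * ry i), sum_dev_fn q y (At i) qm (b * Sy),
      hqySyt, hrytq i, ← hSy, show ∑ j, At i j * y j = ry i from rfl] at hs
    rw [hY1]
    nlinarith only [hs]
  have hkeyY2 : ∀ i, (b * Sy) * ryt i ≤ ry i * Y2 := by
    intro i
    have hterm : ∀ j, (q j - qM) * (y j * (At i j * (b * Sy))) ≤ (q j - qM) * (y j * (a * ry i)) := by
      intro j
      apply mul_le_mul_of_nonpos_left _ (sub_nonpos.2 (hjM j (mem_univ _)))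
      apply mul_le_mul_of_nonneg_left _ (hy j).le
      calc a * ry i ≤ a * (b * Sy) := mul_le_mul_of_nonneg_left (hryub i) ha.le
        _ ≤ At i j * (b * Sy) := mul_le_mul_of_nonneg_right (hA i j).1 (mul_pos hb hSyp).le
    have hs := Finset.sum_le_sum fun j (_ : j ∈ univ) => hterm j
    rw [sum_dev_const q y qM (a * ry i), sum_dev_fn q y (At i) qM (b * Sy),
      hqySyt, hrytq i, ← hSy, show ∑ j, At i j * y j = ry i from rfl] at hs
    rw [hY2]
    nlinarith only [hs]
  -- key inequalities, column version
  have hkeyX1 : ∀ j, cx j * X1 ≤ (b * Sx) * col j := by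
    intro j
    have hterm : ∀ i, (p i - pm) * (x i * (a * cx j)) ≤ (p i - pm) * (x i * (At i j * (b * Sx))) := by
      intro i
      apply mul_le_mul_of_nonneg_left _ (sub_nonneg.2 (him i (mem_univ _)))
      apply mul_le_mul_of_nonneg_left _ (hx i).le
      calc a * cx j ≤ a * (b * Sx) := mul_le_mul_of_nonneg_left (hcxub j) ha.le
        _ ≤ At i j * (b * Sx) := mul_le_mul_of_nonneg_right (hA i j).1 (mul_pos hb hSxp).le
    have hs := Finset.sum_le_sum fun i (_ : i ∈ univ) => hterm i
    rw [sum_dev_const p x pm (a * cx j), sum_dev_fn p x (fun i => At i j) pm (b * Sx),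
      hpxSxt, hcolp j, ← hSx, hcxAt j] at hs
    rw [hX1]
    nlinarith only [hs]
  have hkeyX2 : ∀ j, (b * Sx) * col j ≤ cx j * X2 := by
    intro j
    have hterm : ∀ i, (p i - pM) * (x i * (At i j * (b * Sx))) ≤ (p i - pM) * (x i * (a * cx j)) := by
      intro i
      apply mul_le_mul_of_nonpos_left _ (sub_nonpos.2 (hiM i (mem_univ _)))
      apply mul_le_mul_of_nonneg_left _ (hx i).le
      calc a * cx j ≤ a * (b * Sx) := mul_le_mul_of_nonneg_left (hcxub j) ha.le
        _ ≤ At i j * (b * Sx) := mul_le_mul_of_nonneg_right (hA i j).1 (mul_pos hb hSxp).le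
    have hs := Finset.sum_le_sum fun i (_ : i ∈ univ) => hterm i
    rw [sum_dev_const p x pM (a * cx j), sum_dev_fn p x (fun i => At i j) pM (b * Sx),
      hpxSxt, hcolp j, ← hSx, hcxAt j] at hs
    rw [hX2]
    nlinarith only [hs]
  have hY2pos : 0 < Y2 := by
    rw [hY2]
    linarith only [mul_nonneg hba (mul_pos hqMpos hSyp).le, mul_pos ha hSytp]
  have hX2pos : 0 < X2 := by
    rw [hX2]
    linarith only [mul_nonneg hba (mul_pos hpMpos hSxp).le, mul_pos ha hSxtp]
  -- bounds for p
  have hpU : ∀ i, p i * ((1-ε) * Y1) ≤ b * Sy := by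
    intro i
    have h3 : (u i * ((1-ε) * Y1)) * ryt i ≤ (x i * (b * Sy)) * ryt i := by
      calc (u i * ((1-ε)*Y1)) * ryt i = ((1-ε) * r i) * Y1 := by rw [← hrowExact i]; ring
        _ ≤ (x i * ry i) * Y1 := mul_le_mul_of_nonneg_right (hrowa i).1 hY1pos.le
        _ = x i * (ry i * Y1) := by ring
        _ ≤ x i * ((b*Sy) * ryt i) := mul_le_mul_of_nonneg_left (hkeyY1 i) (hx i).le
        _ = (x i * (b*Sy)) * ryt i := by ring
    have h4 : u i * ((1-ε) * Y1) ≤ x i * (b * Sy) := le_of_mul_le_mul_right h3 (hrytpos i)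
    rw [hpdef]
    simp only []
    rw [div_mul_eq_mul_div, div_le_iff₀ (hx i)]
    linarith only [h4]
  have hpL : ∀ i, b * Sy ≤ p i * ((1+ε) * Y2) := by
    intro i
    have h3 : (x i * (b * Sy)) * ryt i ≤ (u i * ((1+ε) * Y2)) * ryt i := by
      calc (x i * (b*Sy)) * ryt i = x i * ((b*Sy) * ryt i) := by ring
        _ ≤ x i * (ry i * Y2) := mul_le_mul_of_nonneg_left (hkeyY2 i) (hx i).le
        _ = (x i * ry i) * Y2 := by ring
        _ ≤ ((1+ε) * r i) * Y2 := mul_le_mul_of_nonneg_right (hrowa i).2 hY2pos.le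
        _ = (u i * ((1+ε)*Y2)) * ryt i := by rw [← hrowExact i]; ring
    have h4 : x i * (b * Sy) ≤ u i * ((1+ε) * Y2) := le_of_mul_le_mul_right h3 (hrytpos i)
    rw [hpdef]
    simp only []
    rw [div_mul_eq_mul_div, le_div_iff₀ (hx i)]
    linarith only [h4]
  -- bounds for q
  have hqU : ∀ j, q j * ((1-ε) * X1) ≤ b * Sx := by
    intro j
    have h3 : (yt0 j * ((1-ε) * X1)) * col j ≤ (y j * (b * Sx)) * col j := by
      calc (yt0 j * ((1-ε)*X1)) * col j = ((1-ε) * c j) * X1 := by rw [← hcolExact j]; ring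
        _ ≤ (cx j * y j) * X1 := mul_le_mul_of_nonneg_right (hcola2 j).1 hX1pos.le
        _ = y j * (cx j * X1) := by ring
        _ ≤ y j * ((b*Sx) * col j) := mul_le_mul_of_nonneg_left (hkeyX1 j) (hy j).le
        _ = (y j * (b*Sx)) * col j := by ring
    have h4 : yt0 j * ((1-ε) * X1) ≤ y j * (b * Sx) := le_of_mul_le_mul_right h3 (hcolpos j)
    rw [hqdef]
    simp only []
    rw [div_mul_eq_mul_div, div_le_iff₀ (hy j)]
    linarith only [h4]
  have hqL : ∀ j, b * Sx ≤ q j * ((1+ε) * X2) := by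
    intro j
    have h3 : (y j * (b * Sx)) * col j ≤ (yt0 j * ((1+ε) * X2)) * col j := by
      calc (y j * (b*Sx)) * col j = y j * ((b*Sx) * col j) := by ring
        _ ≤ y j * (cx j * X2) := mul_le_mul_of_nonneg_left (hkeyX2 j) (hy j).le
        _ = (cx j * y j) * X2 := by ring
        _ ≤ ((1+ε) * c j) * X2 := mul_le_mul_of_nonneg_right (hcola2 j).2 hX2pos.le
        _ = (yt0 j * ((1+ε)*X2)) * col j := by rw [← hcolExact j]; ring
    have h4 : y j * (b * Sx) ≤ yt0 j * ((1+ε) * X2) := le_of_mul_le_mul_right h3 (hcolpos j)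
    rw [hqdef]
    simp only []
    rw [div_mul_eq_mul_div, le_div_iff₀ (hy j)]
    linarith only [h4]
  -- a-priori bounds (used in the crude regime)
  have hE5U : pM * ((1-ε) * (a * Syt)) ≤ b * Sy := by
    have h3 : u iM * ((1-ε) * (a * Syt)) ≤ x iM * (b * Sy) := by
      calc u iM * ((1-ε) * (a * Syt)) ≤ u iM * ((1-ε) * ryt iM) := by
            apply mul_le_mul_of_nonneg_left _ (hu0 iM).le
            exact mul_le_mul_of_nonneg_left (hrytlb iM) h1ε.le
        _ = (1-ε) * (u iM * ryt iM) := by ring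
        _ = (1-ε) * r iM := by rw [hrowExact iM]
        _ ≤ x iM * ry iM := (hrowa iM).1
        _ ≤ x iM * (b * Sy) := mul_le_mul_of_nonneg_left (hryub iM) (hx iM).le
    rw [hpM, hpdef]
    simp only []
    rw [div_mul_eq_mul_div, div_le_iff₀ (hx iM)]
    linarith only [h3]
  have hE5L : a * Sy ≤ pm * ((1+ε) * (b * Syt)) := by
    have h3 : x im * (a * Sy) ≤ u im * ((1+ε) * (b * Syt)) := by
      calc x im * (a * Sy) ≤ x im * ry im := mul_le_mul_of_nonneg_left (hrylb im) (hx im).le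
        _ ≤ (1+ε) * r im := (hrowa im).2
        _ = (1+ε) * (u im * ryt im) := by rw [hrowExact im]
        _ ≤ (1+ε) * (u im * (b * Syt)) := by
            apply mul_le_mul_of_nonneg_left _ h1ε'.le
            exact mul_le_mul_of_nonneg_left (hrytub im) (hu0 im).le
        _ = u im * ((1+ε) * (b * Syt)) := by ring
    rw [hpm, hpdef]
    simp only []
    rw [div_mul_eq_mul_div, le_div_iff₀ (hx im)]
    linarith only [h3]
  -- mediant-type identities
  have hiii : b * qm * Y2 ≤ Y1 * (a*qm + (b-a)*qM) := by
    have key : 0 ≤ (a*(b-a)*(qM - qm))*(Syt - qm*Sy) :=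
      mul_nonneg (mul_nonneg (mul_nonneg ha.le hba) (sub_nonneg.2 hqmM))
        (sub_nonneg.2 hSytl)
    rw [hY1, hY2]
    nlinarith only [key]
  have hiv : b * pm * X2 ≤ X1 * (a*pm + (b-a)*pM) := by
    have key : 0 ≤ (a*(b-a)*(pM - pm))*(Sxt - pm*Sx) :=
      mul_nonneg (mul_nonneg (mul_nonneg ha.le hba) (sub_nonneg.2 hpmM))
        (sub_nonneg.2 hSxtl)
    rw [hX1, hX2]
    nlinarith only [key]
  -- contraction chains
  have hR1 : pM * ((1-ε) * (b * qm)) ≤ pm * ((1+ε) * (a*qm + (b-a)*qM)) := by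
    have t1 : pM * ((1-ε)*Y1) ≤ pm * ((1+ε)*Y2) := (hpU iM).trans (hpL im)
    have t2 : (pM * ((1-ε) * (b * qm))) * Y1 ≤ (pm * ((1+ε) * (a*qm+(b-a)*qM))) * Y1 := by
      calc (pM * ((1-ε) * (b * qm))) * Y1 = (b*qm) * (pM * ((1-ε)*Y1)) := by ring
        _ ≤ (b*qm) * (pm * ((1+ε)*Y2)) :=
            mul_le_mul_of_nonneg_left t1 (mul_pos hb hqmpos).le
        _ = (pm * (1+ε)) * (b * qm * Y2) := by ring
        _ ≤ (pm * (1+ε)) * (Y1 * (a*qm+(b-a)*qM)) :=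
            mul_le_mul_of_nonneg_left hiii (mul_pos hpmpos h1ε').le
        _ = (pm * ((1+ε) * (a*qm+(b-a)*qM))) * Y1 := by ring
    exact le_of_mul_le_mul_right t2 hY1pos
  have hR2 : qM * ((1-ε) * (b * pm)) ≤ qm * ((1+ε) * (a*pm + (b-a)*pM)) := by
    have t1 : qM * ((1-ε)*X1) ≤ qm * ((1+ε)*X2) := (hqU jM).trans (hqL jm)
    have t2 : (qM * ((1-ε) * (b * pm))) * X1 ≤ (qm * ((1+ε) * (a*pm+(b-a)*pM))) * X1 := by
      calc (qM * ((1-ε) * (b * pm))) * X1 = (b*pm) * (qM * ((1-ε)*X1)) := by ring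
        _ ≤ (b*pm) * (qm * ((1+ε)*X2)) :=
            mul_le_mul_of_nonneg_left t1 (mul_pos hb hpmpos).le
        _ = (qm * (1+ε)) * (b * pm * X2) := by ring
        _ ≤ (qm * (1+ε)) * (X1 * (a*pm+(b-a)*pM)) :=
            mul_le_mul_of_nonneg_left hiv (mul_pos hqmpos h1ε').le
        _ = (qm * ((1+ε) * (a*pm+(b-a)*pM))) * X1 := by ring
    exact le_of_mul_le_mul_right t2 hX1pos
  -- core inequality
  have hcore : pM * ((1+ε)*a - 2*ε*b) ≤ pm * (a*(1+ε)) := by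
    have hFc : 0 < (1-ε)*b + (1+ε)*(b-a) := by
      linarith only [mul_pos h1ε hb, mul_nonneg h1ε'.le hba]
    apply le_of_mul_le_mul_right _ hFc
    apply le_of_mul_le_mul_right _ hqmpos
    have h1' := mul_le_mul_of_nonneg_left hR1 (show (0:ℝ) ≤ (1-ε)*b by positivity)
    have h2' := mul_le_mul_of_nonneg_left hR2 (show (0:ℝ) ≤ (1+ε)*(b-a) by positivity)
    nlinarith only [h1', h2']
  -- numeric combination
  have hβ1 : (1:ℝ) ≤ b/a := (one_le_div ha).2 hab
  have hβpos : (0:ℝ) < b/a := div_pos hb ha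
  set Tt : ℝ := ε * (2 + 4*(b/a)^3) with hTtdef
  have hTt0 : 0 < Tt := by
    rw [hTtdef]
    exact mul_pos hε0 (by positivity)
  set G : ℝ := ((1-ε)*(1+Tt))^2 with hGdef
  have hPG : pM ≤ G * pm := by
    rcases le_or_gt (4*ε*b) ((1+ε)*a) with hcase | hcase
    · -- contraction regime
      have hz0 : 0 ≤ 4*ε*(b/a) - 4*ε := by nlinarith only [hε0, hβ1]
      have hwle : 4*ε*(b/a) ≤ 1+ε := by
        rw [← mul_div_assoc, div_le_iff₀ ha]
        linarith only [hcase]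
      have hy0 : 0 ≤ 1 - 3*ε - (4*ε*(b/a) - 4*ε) := by linarith only [hwle]
      have hnum := numA ε (4*ε*(b/a) - 4*ε) hε0.le hz0 hy0
      rw [show 4*ε + (4*ε*(b/a) - 4*ε) = 4*ε*(b/a) by ring] at hnum
      have hGa : (0:ℝ) < 1+ε-4*ε*(b/a)/2 := by linarith only [hwle, hε0]
      have hmono : (1-ε)^2*(1+2*ε+4*ε*(b/a))^2*(1+ε-4*ε*(b/a)/2)
          ≤ G*(1+ε-4*ε*(b/a)/2) := by
        apply mul_le_mul_of_nonneg_right _ hGa.le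
        rw [hGdef, hTtdef, mul_pow]
        apply mul_le_mul_of_nonneg_left _ (sq_nonneg (1-ε))
        apply pow_le_pow_left₀ (by positivity)
        nlinarith only [mul_nonneg (mul_nonneg hε0.le hβpos.le)
          (by nlinarith only [hβ1] : (0:ℝ) ≤ (b/a)^2 - 1)]
      have hEa : (1+ε)*a - 2*ε*b = a*(1+ε-4*ε*(b/a)/2) := by
        field_simp
        ring
      have final : pM * (a*(1+ε-4*ε*(b/a)/2)) ≤ (G*pm) * (a*(1+ε-4*ε*(b/a)/2)) := by
        calc pM * (a*(1+ε-4*ε*(b/a)/2)) = pM*((1+ε)*a - 2*ε*b) := by rw [hEa]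
          _ ≤ pm * (a*(1+ε)) := hcore
          _ ≤ pm * (a*(G*(1+ε-4*ε*(b/a)/2))) := by
              apply mul_le_mul_of_nonneg_left _ hpmpos.le
              exact mul_le_mul_of_nonneg_left (hnum.trans hmono) ha.le
          _ = (G*pm) * (a*(1+ε-4*ε*(b/a)/2)) := by ring
      exact le_of_mul_le_mul_right final (mul_pos ha hGa)
    · -- crude regime
      have hE5c : pM * ((1-ε)*(a*a)) ≤ pm * ((1+ε)*(b*b)) := by
        have m1 : (pM * ((1-ε)*(a*a))) * (Syt*Sy) ≤ (pm * ((1+ε)*(b*b))) * (Syt*Sy) := by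
          calc (pM * ((1-ε)*(a*a))) * (Syt*Sy)
              = (pM * ((1-ε)*(a*Syt))) * (a*Sy) := by ring
            _ ≤ (b*Sy) * (a*Sy) := mul_le_mul_of_nonneg_right hE5U (mul_pos ha hSyp).le
            _ = (a*Sy) * (b*Sy) := by ring
            _ ≤ (pm*((1+ε)*(b*Syt))) * (b*Sy) :=
                mul_le_mul_of_nonneg_right hE5L (mul_pos hb hSyp).le
            _ = (pm * ((1+ε)*(b*b))) * (Syt*Sy) := by ring
        exact le_of_mul_le_mul_right m1 (mul_pos hSytp hSyp)
      have ht1 : (1:ℝ) ≤ (b/a)^2 := by nlinarith only [hβ1]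
      have hnb := numB ε ((b/a)^2) hε0.le hε12 ht1
      have hc2 : (1+ε) ≤ 4*ε*(b/a) := by
        rw [← mul_div_assoc, le_div_iff₀ ha]
        linarith only [hcase]
      have hc3 : (1+ε)*(b/a)^2 ≤ 4*ε*(b/a)^3 := by
        nlinarith only [mul_nonneg (sub_nonneg.2 hc2) (sq_nonneg (b/a))]
      have hmono : (1+2*ε+(1+ε)*(b/a)^2)^2 ≤ (1+Tt)^2 := by
        apply pow_le_pow_left₀ (by positivity)
        rw [hTtdef]
        nlinarith only [hc3]
      have hkey2 : (1+ε)*(b/a)^2 ≤ (1-ε)*G := by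
        rw [hGdef]
        calc (1+ε)*(b/a)^2 ≤ (1-ε)^3*(1+2*ε+(1+ε)*(b/a)^2)^2 := hnb
          _ ≤ (1-ε)^3*(1+Tt)^2 := mul_le_mul_of_nonneg_left hmono (by positivity)
          _ = (1-ε)*((1-ε)*(1+Tt))^2 := by ring
      have hbb : (1+ε)*(b*b) = (a*a)*((1+ε)*(b/a)^2) := by
        field_simp
      have final : pM * ((1-ε)*(a*a)) ≤ (G*pm) * ((1-ε)*(a*a)) := by
        calc pM * ((1-ε)*(a*a)) ≤ pm * ((1+ε)*(b*b)) := hE5c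
          _ = pm * ((a*a)*((1+ε)*(b/a)^2)) := by rw [hbb]
          _ ≤ pm * ((a*a)*((1-ε)*G)) := by
              apply mul_le_mul_of_nonneg_left _ hpmpos.le
              exact mul_le_mul_of_nonneg_left hkey2 (by positivity)
          _ = (G*pm) * ((1-ε)*(a*a)) := by ring
      exact le_of_mul_le_mul_right final (by positivity)
  -- square-root normalization
  set s0 : ℝ := Real.sqrt (pM * pm) with hs0def
  have hs0pos : 0 < s0 := Real.sqrt_pos.2 (mul_pos hpMpos hpmpos)
  have hs0sq : s0^2 = pM * pm := Real.sq_sqrt (mul_pos hpMpos hpmpos).le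
  have hG1 : 0 < (1-ε)*(1+Tt) := mul_pos h1ε (by linarith only [hTt0])
  have hs0le : s0 ≤ ((1-ε)*(1+Tt)) * pm := by
    have heq : G*pm*pm = (((1-ε)*(1+Tt))*pm)^2 := by rw [hGdef]; ring
    have h' : pM * pm ≤ (((1-ε)*(1+Tt))*pm)^2 := by
      nlinarith only [mul_le_mul_of_nonneg_right hPG hpmpos.le, heq]
    calc s0 = Real.sqrt (pM*pm) := by rw [hs0def]
      _ ≤ Real.sqrt ((((1-ε)*(1+Tt))*pm)^2) := Real.sqrt_le_sqrt h'
      _ = ((1-ε)*(1+Tt))*pm := Real.sqrt_sq (by positivity)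
  have hpMle : pM ≤ ((1-ε)*(1+Tt)) * s0 := by
    have heq : (((1-ε)*(1+Tt))*s0)^2 = G*(pM*pm) := by
      rw [hGdef, mul_pow, hs0sq]
    have h' : pM^2 ≤ (((1-ε)*(1+Tt))*s0)^2 := by
      nlinarith only [mul_le_mul_of_nonneg_right hPG hpMpos.le, heq]
    calc pM = Real.sqrt (pM^2) := (Real.sqrt_sq hpMpos.le).symm
      _ ≤ Real.sqrt ((((1-ε)*(1+Tt))*s0)^2) := Real.sqrt_le_sqrt h'
      _ = ((1-ε)*(1+Tt))*s0 := Real.sqrt_sq (by positivity)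
  -- q compared to p-extremes
  have hqml : ∀ j, q j * ((1-ε) * pm) ≤ 1 := by
    intro j
    have hX1lb : b*(pm*Sx) ≤ X1 := by
      rw [hX1]
      nlinarith only [mul_le_mul_of_nonneg_left hSxtl ha.le]
    have h1 : (q j * ((1-ε) * pm)) * (b*Sx) ≤ 1 * (b*Sx) := by
      calc (q j * ((1-ε) * pm)) * (b*Sx) = (q j * (1-ε)) * (b*(pm*Sx)) := by ring
        _ ≤ (q j * (1-ε)) * X1 := by
            apply mul_le_mul_of_nonneg_left hX1lb
            exact mul_nonneg (hqpos j).le h1ε.le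
        _ = q j * ((1-ε) * X1) := by ring
        _ ≤ b * Sx := hqU j
        _ = 1 * (b*Sx) := by ring
    exact le_of_mul_le_mul_right h1 (mul_pos hb hSxp)
  have hqMl : ∀ j, 1 ≤ q j * ((1+ε) * pM) := by
    intro j
    have hX2ub : X2 ≤ b*(pM*Sx) := by
      rw [hX2]
      nlinarith only [mul_le_mul_of_nonneg_left hSxtu ha.le]
    have h1 : 1 * (b*Sx) ≤ (q j * ((1+ε) * pM)) * (b*Sx) := by
      calc 1 * (b*Sx) = b * Sx := by ring
        _ ≤ q j * ((1+ε) * X2) := hqL j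
        _ = (q j * (1+ε)) * X2 := by ring
        _ ≤ (q j * (1+ε)) * (b*(pM*Sx)) := by
            apply mul_le_mul_of_nonneg_left hX2ub
            exact mul_nonneg (hqpos j).le h1ε'.le
        _ = (q j * ((1+ε) * pM)) * (b*Sx) := by ring
    exact le_of_mul_le_mul_right h1 (mul_pos hb hSxp)
  -- bounds on normalized ratios
  have hTtle : (1-ε)*(1+Tt) ≤ 1+Tt := by nlinarith only [hε0, hTt0]
  have hxU : ∀ i, p i / s0 - 1 ≤ Tt := by
    intro i
    have h1 : p i ≤ (1+Tt) * s0 := by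
      calc p i ≤ pM := hiM i (mem_univ _)
        _ ≤ ((1-ε)*(1+Tt)) * s0 := hpMle
        _ ≤ (1+Tt) * s0 := mul_le_mul_of_nonneg_right hTtle hs0pos.le
    have h2 : p i / s0 ≤ 1 + Tt := (div_le_iff₀ hs0pos).2 (by linarith only [h1])
    linarith only [h2]
  have hxL : ∀ i, -Tt ≤ p i / s0 - 1 := by
    intro i
    have h1 : (1-Tt) * s0 ≤ p i := by
      rcases le_or_gt (1-Tt) 0 with hT | hT
      · calc (1-Tt) * s0 ≤ 0 := mul_nonpos_of_nonpos_of_nonneg hT hs0pos.le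
          _ ≤ p i := (hppos i).le
      · have hkey : (1-Tt)*((1-ε)*(1+Tt)) ≤ 1 := by
          nlinarith only [mul_nonneg (sq_nonneg Tt) h1ε.le, hε0, sq_nonneg Tt]
        calc (1-Tt) * s0 ≤ (1-Tt) * (((1-ε)*(1+Tt)) * pm) :=
              mul_le_mul_of_nonneg_left hs0le hT.le
          _ = ((1-Tt)*((1-ε)*(1+Tt))) * pm := by ring
          _ ≤ 1 * pm := mul_le_mul_of_nonneg_right hkey hpmpos.le
          _ = pm := one_mul _
          _ ≤ p i := him i (mem_univ _)
    have h2 : 1 - Tt ≤ p i / s0 := (le_div_iff₀ hs0pos).2 (by linarith only [h1])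
    linarith only [h2]
  have hyU : ∀ j, s0 * q j - 1 ≤ Tt := by
    intro j
    have h1 : s0 * q j ≤ 1 + Tt := by
      calc s0 * q j ≤ (((1-ε)*(1+Tt)) * pm) * q j :=
            mul_le_mul_of_nonneg_right hs0le (hqpos j).le
        _ = (1+Tt) * (q j * ((1-ε) * pm)) := by ring
        _ ≤ (1+Tt) * 1 := mul_le_mul_of_nonneg_left (hqml j) (by linarith only [hTt0])
        _ = 1 + Tt := mul_one _
    linarith only [h1]
  have hyL : ∀ j, -Tt ≤ s0 * q j - 1 := by
    intro j
    have h1 : 1 - Tt ≤ s0 * q j := by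
      rcases le_or_gt (1-Tt) 0 with hT | hT
      · calc 1 - Tt ≤ 0 := hT
          _ ≤ s0 * q j := (mul_pos hs0pos (hqpos j)).le
      · have hε2 : (0:ℝ) ≤ 1 - ε^2 := by nlinarith only [hε0, hε12]
        have hB : (0:ℝ) ≤ Tt^2 * (1 - ε^2) := mul_nonneg (sq_nonneg Tt) hε2
        have hkey : ((1-Tt)*(1+Tt))*((1-ε)*(1+ε)) ≤ 1 := by
          nlinarith only [sq_nonneg ε, hB]
        calc 1 - Tt = (1-Tt) * 1 := (mul_one _).symm
          _ ≤ (1-Tt) * (q j * ((1+ε) * pM)) := mul_le_mul_of_nonneg_left (hqMl j) hT.le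
          _ ≤ (1-Tt) * (q j * ((1+ε) * (((1-ε)*(1+Tt)) * s0))) := by
              apply mul_le_mul_of_nonneg_left _ hT.le
              apply mul_le_mul_of_nonneg_left _ (hqpos j).le
              exact mul_le_mul_of_nonneg_left hpMle h1ε'.le
          _ = (s0 * q j) * (((1-Tt)*(1+Tt))*((1-ε)*(1+ε))) := by ring
          _ ≤ (s0 * q j) * 1 := by
              apply mul_le_mul_of_nonneg_left hkey (mul_pos hs0pos (hqpos j)).le
          _ = s0 * q j := mul_one _
    linarith only [h1]
  -- final targets for the error bound
  have hfinal_r : Tt ≤ ε * (2 + 4 * (s / (M * ⨅ i', r i')) * (b/a)^((7:ℝ)/2)) := by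
    obtain ⟨i₁, -, hi₁⟩ := Finset.exists_min_image univ r ⟨Classical.arbitrary _, mem_univ _⟩
    have hge : r i₁ ≤ ⨅ i', r i' := le_ciInf (fun i => hi₁ i (mem_univ i))
    have hinfpos : 0 < ⨅ i', r i' := lt_of_lt_of_le (hr i₁) hge
    have hMinf : (M:ℝ) * (⨅ i', r i') ≤ s := by
      rw [← hs_r]
      calc (M:ℝ) * (⨅ i', r i') = ∑ _i : Fin M, (⨅ i', r i') := by
            rw [Finset.sum_const, card_univ, Fintype.card_fin, nsmul_eq_mul]
        _ ≤ ∑ i, r i := Finset.sum_le_sum fun i _ => ciInf_le (Finite.bddBelow_range r) i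
    have hMpos : (0:ℝ) < M * (⨅ i', r i') :=
      mul_pos (by exact_mod_cast hM) hinfpos
    have h1le : (1:ℝ) ≤ s / (M * ⨅ i', r i') := (one_le_div hMpos).2 hMinf
    have hrp : (b/a)^(3:ℕ) ≤ (b/a)^((7:ℝ)/2) := by
      rw [show ((b/a):ℝ)^(3:ℕ) = (b/a)^((3:ℕ):ℝ) from (Real.rpow_natCast _ 3).symm]
      exact Real.rpow_le_rpow_of_exponent_le hβ1 (by norm_num)
    rw [hTtdef]
    apply mul_le_mul_of_nonneg_left _ hε0.le
    have h2 : (b/a)^(3:ℕ) ≤ (s / (M * ⨅ i', r i')) * (b/a)^((7:ℝ)/2) := by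
      calc ((b/a):ℝ)^(3:ℕ) ≤ (b/a)^((7:ℝ)/2) := hrp
        _ = 1 * (b/a)^((7:ℝ)/2) := (one_mul _).symm
        _ ≤ (s / (M * ⨅ i', r i')) * (b/a)^((7:ℝ)/2) :=
            mul_le_mul_of_nonneg_right h1le (by positivity)
    linarith only [h2]
  have hfinal_c : Tt ≤ ε * (2 + 4 * (s / (N * ⨅ j', c j')) * (b/a)^((7:ℝ)/2)) := by
    obtain ⟨j₁, -, hj₁⟩ := Finset.exists_min_image univ c ⟨Classical.arbitrary _, mem_univ _⟩
    have hge : c j₁ ≤ ⨅ j', c j' := le_ciInf (fun j => hj₁ j (mem_univ j))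
    have hinfpos : 0 < ⨅ j', c j' := lt_of_lt_of_le (hc j₁) hge
    have hNinf : (N:ℝ) * (⨅ j', c j') ≤ s := by
      rw [← hs_c]
      calc (N:ℝ) * (⨅ j', c j') = ∑ _j : Fin N, (⨅ j', c j') := by
            rw [Finset.sum_const, card_univ, Fintype.card_fin, nsmul_eq_mul]
        _ ≤ ∑ j, c j := Finset.sum_le_sum fun j _ => ciInf_le (Finite.bddBelow_range c) j
    have hNpos : (0:ℝ) < N * (⨅ j', c j') :=
      mul_pos (by exact_mod_cast hN) hinfpos
    have h1le : (1:ℝ) ≤ s / (N * ⨅ j', c j') := (one_le_div hNpos).2 hNinf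
    have hrp : (b/a)^(3:ℕ) ≤ (b/a)^((7:ℝ)/2) := by
      rw [show ((b/a):ℝ)^(3:ℕ) = (b/a)^((3:ℕ):ℝ) from (Real.rpow_natCast _ 3).symm]
      exact Real.rpow_le_rpow_of_exponent_le hβ1 (by norm_num)
    rw [hTtdef]
    apply mul_le_mul_of_nonneg_left _ hε0.le
    have h2 : (b/a)^(3:ℕ) ≤ (s / (N * ⨅ j', c j')) * (b/a)^((7:ℝ)/2) := by
      calc ((b/a):ℝ)^(3:ℕ) ≤ (b/a)^((7:ℝ)/2) := hrp
        _ = 1 * (b/a)^((7:ℝ)/2) := (one_mul _).symm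
        _ ≤ (s / (N * ⨅ j', c j')) * (b/a)^((7:ℝ)/2) :=
            mul_le_mul_of_nonneg_right h1le (by positivity)
    linarith only [h2]
  -- the witnesses
  refine ⟨fun i => u i / s0, fun j => s0 * yt0 j, fun i => div_pos (hu0 i) hs0pos,
    fun j => mul_pos hs0pos (hyt0 j), ?_, ?_, ?_, ?_⟩
  · intro i
    have hterm : ∀ j, (u i / s0) * At i j * (s0 * yt0 j) = u i * (At i j * yt0 j) := by
      intro j
      field_simp
    rw [Finset.sum_congr rfl fun j _ => hterm j, ← Finset.mul_sum]
    exact hrowExact i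
  · intro j
    have hterm : ∀ i, (u i / s0) * At i j * (s0 * yt0 j) = (u i * At i j) * yt0 j := by
      intro i
      field_simp
    rw [Finset.sum_congr rfl fun i _ => hterm i, ← Finset.sum_mul]
    rw [mul_comm]
    exact hcolExact j
  · intro i
    have heq : |u i / s0 - x i| / x i = |p i / s0 - 1| := by
      have h1 : |u i / s0 - x i| / x i = |(u i / s0 - x i) / x i| := by
        rw [abs_div, abs_of_pos (hx i)]
      rw [h1]
      congr 1
      rw [hpdef]
      field_simp [hs0pos.ne', (hx i).ne']
    calc |u i / s0 - x i| / x i = |p i / s0 - 1| := heq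
      _ ≤ Tt := abs_le.2 ⟨hxL i, hxU i⟩
      _ ≤ _ := hfinal_r
  · intro j
    have heq : |s0 * yt0 j - y j| / y j = |s0 * q j - 1| := by
      have h1 : |s0 * yt0 j - y j| / y j = |(s0 * yt0 j - y j) / y j| := by
        rw [abs_div, abs_of_pos (hy j)]
      rw [h1]
      congr 1
      rw [hqdef]
      field_simp [hs0pos.ne', (hy j).ne', (hcolpos j).ne']
    calc |s0 * yt0 j - y j| / y j = |s0 * q j - 1| := heq
      _ ≤ Tt := abs_le.2 ⟨hyL j, hyU j⟩
      _ ≤ _ := hfinal_c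
end
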